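/- arXiv:1904.01907 — 5 statements merged into one kernel-verified Lean document; each statement's English description precedes it below -/
import Mathlib

section
/- Let B be a bilinear form on an n-dimensional F_2-vector space V, let rad_r(B) = {y ∈ V : B(x,y)=0 for all x ∈ V} be its right radical, and let h = n − dim(rad_r(B)). Let Ω be an algebraically closed field of characteristic 2 and let J be the ideal of Ω[x_1,…,x_n,y_1,…,y_n] generated by the polynomials B(x,y), B(x,y²), …, B(x,y^(2^(h−1))), where y^(2^l) denotes the tuple (y_1^(2^l),…,y_n^(2^l)). Then the zero set of J in V_Ω × V_Ω equals the union over all F_2-subspaces W ⊆ V of W_Ω^⊥ × W_Ω, where W_Ω^⊥ = {x ∈ V_Ω : B(x,y)=0 for all y ∈ W_Ω}. -/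
open Module Submodule Polynomial

universe u



section Descent
variable {Ω : Type*} [Field Ω] [IsAlgClosed Ω]
variable {M : Type*} [AddCommGroup M] [Module Ω M]

lemma phi_zero (φ : M → M) (hadd : ∀ a b, φ (a + b) = φ a + φ b) : φ 0 = 0 := by
  have := hadd 0 0
  simpa using this.symm

lemma phi_sum (φ : M → M) (hadd : ∀ a b, φ (a + b) = φ a + φ b) {ι : Type*} (s : Finset ι)
    (f : ι → M) : φ (∑ i ∈ s, f i) = ∑ i ∈ s, φ (f i) := by
  classical
  induction s using Finset.induction with
  | empty => simpa using phi_zero φ hadd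
  | insert _ _ h ih => simp [Finset.sum_insert h, hadd, ih]

/-- vectors each not in the span of the previous ones are independent -/
lemma li_of_not_mem_span (v : ℕ → M) :
    ∀ k : ℕ, (∀ i < k, v i ∉ span Ω (Set.range fun j : Fin i => v j)) →
      LinearIndependent Ω (fun i : Fin k => v i) := by
  intro k
  induction k with
  | zero => intro _; exact linearIndependent_empty_type
  | succ k ih =>
    intro h
    have hv : (fun i : Fin (k+1) => v i) = Fin.snoc (fun i : Fin k => v i) (v k) := by
      funext i
      refine Fin.lastCases ?_ (fun j => ?_) i
      · simp [Fin.snoc_last]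
      · simp [Fin.snoc_castSucc]
    rw [hv, linearIndependent_fin_snoc]
    exact ⟨ih (fun i hi => h i (Nat.lt_succ_of_lt hi)), h k (Nat.lt_succ_self k)⟩

lemma card_le_finrank_of_mem [FiniteDimensional Ω M] (T : Submodule Ω M) {k : ℕ}
    (v : Fin k → M) (hv : ∀ i, v i ∈ T) (hind : LinearIndependent Ω v) :
    k ≤ finrank Ω T := by
  have hind' : LinearIndependent Ω (fun i : Fin k => (⟨v i, hv i⟩ : T)) := by
    apply LinearIndependent.of_comp T.subtype
    convert hind
    rfl
  simpa using hind'.fintype_card_le_finrank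
end Descent


section P
variable {Ω : Type*} [Field Ω] [IsAlgClosed Ω]

/-- the recursion polynomials: given c : ℕ → Ω, A 0 = C (c 0) * X^2,
    A (i+1) = (A i)^2 + C (c (i+1)) * X^2 -/
noncomputable def recPoly (c : ℕ → Ω) : ℕ → Polynomial Ω
  | 0 => C (c 0) * X ^ 2
  | (i+1) => (recPoly c i) ^ 2 + C (c (i+1)) * X ^ 2

lemma recPoly_zero (c : ℕ → Ω) : recPoly c 0 = C (c 0) * X ^ 2 := rfl

lemma recPoly_succ (c : ℕ → Ω) (i : ℕ) :
    recPoly c (i+1) = (recPoly c i) ^ 2 + C (c (i+1)) * X ^ 2 := rfl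

lemma recPoly_natDegree (c : ℕ → Ω) (hc : c 0 ≠ 0) :
    ∀ i, (recPoly c i).natDegree = 2 ^ (i + 1) := by
  intro i
  induction i with
  | zero => simpa [recPoly] using natDegree_C_mul_X_pow 2 (c 0) hc
  | succ i ih =>
    have h1 : ((recPoly c i) ^ 2).natDegree = 2 ^ (i + 2) := by
      rw [natDegree_pow, ih]; ring
    have h2 : (C (c (i+1)) * X ^ 2 : Polynomial Ω).natDegree < 2 ^ (i + 2) := by
      calc (C (c (i+1)) * X ^ 2 : Polynomial Ω).natDegree ≤ 2 := natDegree_C_mul_X_pow_le _ _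
        _ < 2 ^ (i + 2) := by
            have : (2:ℕ) ^ 1 < 2 ^ (i+2) := Nat.pow_lt_pow_right (by norm_num) (by omega)
            simpa using this
    rw [recPoly]
    rw [natDegree_add_eq_left_of_natDegree_lt (by rw [h1]; exact h2), h1]

lemma recPoly_dvd (c : ℕ → Ω) : ∀ i, (X:Polynomial Ω) ^ 2 ∣ recPoly c i := by
  intro i
  induction i with
  | zero => exact ⟨C (c 0), mul_comm _ _⟩
  | succ i ih =>
    rw [recPoly]
    exact dvd_add (ih.trans (dvd_pow_self _ (by norm_num))) ⟨C (c (i+1)), mul_comm _ _⟩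

lemma recPoly_exists_root (c : ℕ → Ω) (hc : c 0 ≠ 0) (k : ℕ) :
    ∃ t : Ω, t ≠ 0 ∧ (recPoly c k).eval t = t := by
  obtain ⟨B, hB⟩ := recPoly_dvd c k
  have hA : (recPoly c k).natDegree = 2 ^ (k+1) := recPoly_natDegree c hc k
  have hAne : recPoly c k ≠ 0 := by
    intro h; rw [h] at hA; simp at hA; exact absurd hA.symm (by positivity)
  have hBne : B ≠ 0 := by rintro rfl; simp at hB; exact hAne hB
  have hXB : ((X : Polynomial Ω) * B).natDegree = 2 ^ (k+1) - 1 := by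
    have : ((X:Polynomial Ω)^2 * B).natDegree = 2 + B.natDegree := by
      rw [natDegree_mul (pow_ne_zero 2 X_ne_zero) hBne, natDegree_pow]; simp
    rw [← hB, hA] at this
    rw [natDegree_mul X_ne_zero hBne, natDegree_X]
    omega
  have hdeg : ((X : Polynomial Ω) * B - 1).degree ≠ 0 := by
    have h1 : 1 ≤ ((X : Polynomial Ω) * B).natDegree := by
      rw [hXB]
      have : (2:ℕ) ≤ 2 ^ (k+1) := by
        calc (2:ℕ) = 2^1 := rfl
          _ ≤ 2^(k+1) := Nat.pow_le_pow_right (by norm_num) (by omega)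
      omega
    have hne : ((X:Polynomial Ω) * B).natDegree ≠ (1 : Polynomial Ω).natDegree := by simpa using by omega
    have : ((X : Polynomial Ω) * B - 1).natDegree = ((X:Polynomial Ω) * B).natDegree := by
      apply natDegree_sub_eq_left_of_natDegree_lt
      simpa using by omega
    intro hd
    have := natDegree_eq_zero_iff_degree_le_zero.mpr (le_of_eq hd)
    omega
  obtain ⟨t, ht⟩ := IsAlgClosed.exists_root _ hdeg
  have htv : t * B.eval t = 1 := by
    have := ht
    simp only [IsRoot, eval_sub, eval_mul, eval_X, eval_one, sub_eq_zero] at this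
    exact this
  refine ⟨t, ?_, ?_⟩
  · intro h; rw [h] at htv; simp at htv
  · rw [hB]
    have : eval t ((X:Polynomial Ω)^2 * B) = t^2 * B.eval t := by simp
    rw [this]
    calc t^2 * B.eval t = t * (t * B.eval t) := by ring
      _ = t := by rw [htv, mul_one]
end P

section C
variable {Ω : Type*} [Field Ω] [IsAlgClosed Ω]
variable {M : Type*} [AddCommGroup M] [Module Ω M]

lemma exists_fixed [FiniteDimensional Ω M] (φ : M → M)
    (hadd : ∀ a b, φ (a + b) = φ a + φ b)
    (hsmul : ∀ (c : Ω) (a : M), φ (c • a) = (c * c) • φ a)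
    (hinj : Function.Injective φ)
    (T : Submodule Ω M) (hT : ∀ z ∈ T, φ z ∈ T) (hne : T ≠ ⊥) :
    ∃ w ∈ T, w ≠ 0 ∧ φ w = w := by
  classical
  obtain ⟨v, hvT, hv0⟩ := T.ne_bot_iff.mp hne
  have hiter : ∀ l, φ^[l] v ∈ T := by
    intro l
    induction l with
    | zero => exact hvT
    | succ l ih => rw [Function.iterate_succ_apply']; exact hT _ ih
  set P : ℕ → Prop := fun m => φ^[m] v ∈ span Ω (Set.range fun i : Fin m => φ^[i] v) with hP
  have hex : ∃ m, P m := by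
    by_contra hcon
    push_neg at hcon
    have hind := li_of_not_mem_span (fun l => φ^[l] v) (finrank Ω T + 1)
      (fun i _ => hcon i)
    have := card_le_finrank_of_mem T _ (fun i : Fin (finrank Ω T + 1) => hiter i) hind
    omega
  obtain ⟨m, hm, hmin⟩ : ∃ m, P m ∧ ∀ i < m, ¬ P i :=
    ⟨Nat.find hex, Nat.find_spec hex, fun i hi => Nat.find_min hex hi⟩
  have hm0 : m ≠ 0 := by
    intro h0
    rw [h0] at hm
    simp only [hP] at hm
    have : Set.range (fun i : Fin 0 => φ^[(i:ℕ)] v) = ∅ := by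
      simp
    rw [this, span_empty, mem_bot] at hm
    exact hv0 hm
  obtain ⟨k, rfl⟩ : ∃ k, m = k + 1 := ⟨m - 1, by omega⟩
  have hind : LinearIndependent Ω (fun i : Fin (k+1) => φ^[(i:ℕ)] v) :=
    li_of_not_mem_span (fun l => φ^[l] v) (k+1) hmin
  obtain ⟨c, hc⟩ : ∃ c : Fin (k+1) → Ω,
      (∑ i, c i • φ^[(i:ℕ)] v) = φ^[k+1] v := (mem_span_range_iff_exists_fun Ω).mp hm
  -- c 0 ≠ 0
  have hc0 : c 0 ≠ 0 := by
    intro h0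
    have hs : ∀ i : Fin k, ∃ s : Ω, s * s = c i.succ := by
      intro i
      obtain ⟨z, hz⟩ := IsAlgClosed.exists_pow_nat_eq (c i.succ) (n := 2) two_pos
      exact ⟨z, by rw [← hz]; ring⟩
    choose s hs using hs
    have key : φ (∑ i : Fin k, s i • φ^[(i:ℕ)] v) = φ (φ^[k] v) := by
      rw [phi_sum φ hadd]
      rw [← Function.iterate_succ_apply' φ k v, ← hc, Fin.sum_univ_succ, h0, zero_smul,
        zero_add]
      apply Finset.sum_congr rfl
      intro i _
      rw [hsmul, hs, ← Function.iterate_succ_apply' φ]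
      simp [Fin.val_succ]
    have := hinj key
    exact hmin k (by omega) ((mem_span_range_iff_exists_fun Ω).mpr ⟨s, this⟩)
  set c' : ℕ → Ω := fun i => if h : i < k+1 then c ⟨i, h⟩ else 0 with hc'def
  have hc'eq0 : c' 0 = c 0 := by simp [hc'def]
  have hc'0 : c' 0 ≠ 0 := by rw [hc'eq0]; exact hc0
  obtain ⟨t, ht0, htv⟩ := recPoly_exists_root c' hc'0 k
  set a : ℕ → Ω := fun i => (recPoly c' i).eval t with hadef
  have ha0 : a 0 = c' 0 * (t * t) := by
    show eval t (recPoly c' 0) = _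
    rw [recPoly_zero, eval_mul, eval_C, eval_pow, eval_X]; ring
  have haS : ∀ i, a (i+1) = a i * a i + c' (i+1) * (t * t) := by
    intro i
    show eval t (recPoly c' (i+1)) = _
    rw [recPoly_succ, eval_add, eval_pow, eval_mul, eval_C, eval_pow, eval_X]
    have : eval t (recPoly c' i) = a i := rfl
    rw [this]; ring
  have hak : a k = t := htv
  refine ⟨∑ i : Fin (k+1), a i • φ^[(i:ℕ)] v, sum_mem fun i _ => smul_mem _ _ (hiter i), ?_, ?_⟩
  · intro hw
    have := Fintype.linearIndependent_iff.mp hind (fun i => a i) hw (Fin.last k)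
    rw [Fin.val_last, hak] at this
    exact ht0 this
  · -- φ w = w
    have hstep : ∀ i : Fin (k+1), φ (a i • φ^[(i:ℕ)] v) = (a i * a i) • φ^[(i:ℕ)+1] v := by
      intro i
      rw [hsmul, ← Function.iterate_succ_apply' φ]
    rw [phi_sum φ hadd]
    calc (∑ i : Fin (k+1), φ (a i • φ^[(i:ℕ)] v))
        = ∑ i : Fin (k+1), (a i * a i) • φ^[(i:ℕ)+1] v := by
          exact Finset.sum_congr rfl fun i _ => hstep i
      _ = (∑ i : Fin k, (a i * a i) • φ^[(i:ℕ)+1] v) + (a k * a k) • φ^[k+1] v := by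
          rw [Fin.sum_univ_castSucc]
          simp [Fin.coe_castSucc, Fin.val_last]
      _ = (∑ i : Fin k, (a i * a i) • φ^[(i:ℕ)+1] v)
            + (∑ j : Fin (k+1), (a k * a k * c j) • φ^[(j:ℕ)] v) := by
          rw [← hc, Finset.smul_sum]
          congr 1
          exact Finset.sum_congr rfl fun j _ => by rw [smul_smul]
      _ = ∑ i : Fin (k+1), a i • φ^[(i:ℕ)] v := by
          rw [Fin.sum_univ_succ (f := fun j : Fin (k+1) => (a k * a k * c j) • φ^[(j:ℕ)] v)]
          rw [Fin.sum_univ_succ (f := fun j : Fin (k+1) => a j • φ^[(j:ℕ)] v)]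
          have h0 : (a k * a k * c 0) • φ^[((0 : Fin (k+1)):ℕ)] v
              = a 0 • φ^[((0 : Fin (k+1)):ℕ)] v := by
            rw [ha0, hak, hc'eq0]
            congr 1
            ring
          have hsucc : ∀ i : Fin k,
              (a i * a i) • φ^[(i:ℕ)+1] v + (a k * a k * c i.succ) • φ^[(i.succ:ℕ)] v
                = a (i.succ) • φ^[(i.succ:ℕ)] v := by
            intro i
            have hv1 : ((i.succ : Fin (k+1)) : ℕ) = (i:ℕ)+1 := rfl
            rw [hv1, ← add_smul]
            congr 1
            rw [haS]
            have : c' ((i:ℕ)+1) = c i.succ := by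
              have hlt : (i:ℕ)+1 < k+1 := by omega
              simp only [hc'def, dif_pos hlt]
              congr 1
            rw [this, hak]
            ring
          have hrhs : (∑ i : Fin k, a (i.succ:ℕ) • φ^[((i.succ : Fin (k+1)):ℕ)] v)
              = ∑ i : Fin k, ((a i * a i) • φ^[(i:ℕ)+1] v
                + (a k * a k * c i.succ) • φ^[((i.succ : Fin (k+1)):ℕ)] v) :=
            Finset.sum_congr rfl fun i _ => (hsucc i).symm
          rw [hrhs, Finset.sum_add_distrib, h0]
          simp only [Fin.val_zero]
          abel
end C

section D
variable {Ω : Type*} [Field Ω] [IsAlgClosed Ω]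

/-- solving `s * s + cc = s` in an algebraically closed field -/
lemma exists_artin_schreier (cc : Ω) : ∃ s : Ω, s * s + cc = s := by
  set q : Polynomial Ω := X ^ 2 + (C cc - X) with hq
  have hnd : q.natDegree = 2 := by
    rw [hq]
    rw [natDegree_add_eq_left_of_natDegree_lt]
    · exact natDegree_X_pow 2
    · rw [natDegree_X_pow]
      calc (C cc - X : Polynomial Ω).natDegree ≤
          max (C cc : Polynomial Ω).natDegree (X : Polynomial Ω).natDegree := natDegree_sub_le _ _
        _ < 2 := by rw [natDegree_C, natDegree_X]; omega
  have hdeg : q.degree ≠ 0 := by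
    intro h
    have := natDegree_eq_zero_iff_degree_le_zero.mpr (le_of_eq h)
    omega
  obtain ⟨s, hs⟩ := IsAlgClosed.exists_root q hdeg
  refine ⟨s, ?_⟩
  have : s^2 + (cc - s) = 0 := by simpa [hq, IsRoot] using hs
  linear_combination this

lemma descent_aux (d : ℕ) :
    ∀ {M : Type u} [AddCommGroup M] [Module Ω M] [FiniteDimensional Ω M]
      (φ : M → M), (∀ a b, φ (a + b) = φ a + φ b) →
      (∀ (c : Ω) (a : M), φ (c • a) = (c * c) • φ a) →
      Function.Injective φ →
      ∀ (T : Submodule Ω M), (∀ z ∈ T, φ z ∈ T) → finrank Ω T ≤ d →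
      T ≤ span Ω {z | z ∈ T ∧ φ z = z} := by
  induction d with
  | zero =>
    intro M _ _ _ φ hadd hsmul hinj T hT hd
    have : T = ⊥ := Submodule.finrank_eq_zero.mp (Nat.le_zero.mp hd)
    rw [this]
    exact bot_le
  | succ d ih =>
    intro M _ _ _ φ hadd hsmul hinj T hT hd
    by_cases hbot : T = ⊥
    · rw [hbot]; exact bot_le
    obtain ⟨w, hwT, hw0, hwfix⟩ := exists_fixed φ hadd hsmul hinj T hT hbot
    set N : Submodule Ω M := Ω ∙ w with hN
    set π := N.mkQ with hπ
    -- well-definedness of the induced map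
    have hwd : ∀ z1 z2 : M, π z1 = π z2 → π (φ z1) = π (φ z2) := by
      intro z1 z2 h
      have h1 : z1 - z2 ∈ N := (Submodule.Quotient.eq N).mp (by simpa [hπ] using h)
      obtain ⟨cc, hcc⟩ := Submodule.mem_span_singleton.mp h1
      have hz1 : z1 = z2 + cc • w := by rw [hcc]; abel
      have : φ z1 = φ z2 + (cc * cc) • w := by
        rw [hz1, hadd, hsmul, hwfix]
      rw [this]
      simp only [hπ, map_add]
      have : N.mkQ ((cc * cc) • w) = 0 := by
        rw [Submodule.mkQ_apply, Submodule.Quotient.mk_eq_zero]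
        exact smul_mem _ _ (mem_span_singleton_self w)
      rw [this, add_zero]
    set φ' : (M ⧸ N) → (M ⧸ N) := fun x => π (φ (Quotient.out x)) with hφ'def
    have hφ' : ∀ z : M, φ' (π z) = π (φ z) := by
      intro z
      apply hwd
      exact Quotient.out_eq' _
    have hsurj : Function.Surjective π := Submodule.mkQ_surjective N
    have hadd' : ∀ a b, φ' (a + b) = φ' a + φ' b := by
      intro a b
      obtain ⟨z1, rfl⟩ := hsurj a
      obtain ⟨z2, rfl⟩ := hsurj b
      rw [← map_add, hφ', hφ', hφ', hadd, map_add]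
    have hsmul' : ∀ (c : Ω) a, φ' (c • a) = (c * c) • φ' a := by
      intro c a
      obtain ⟨z, rfl⟩ := hsurj a
      rw [← map_smul, hφ', hφ', hsmul, map_smul]
    have hinj' : Function.Injective φ' := by
      intro a b hab
      obtain ⟨z1, rfl⟩ := hsurj a
      obtain ⟨z2, rfl⟩ := hsurj b
      rw [hφ', hφ'] at hab
      have h1 : φ z1 - φ z2 ∈ N := (Submodule.Quotient.eq N).mp (by simpa [hπ] using hab)
      obtain ⟨cc, hcc⟩ := Submodule.mem_span_singleton.mp h1
      obtain ⟨s, hs⟩ := IsAlgClosed.exists_pow_nat_eq cc (n := 2) two_pos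
      have hss : s * s = cc := by rw [← hs]; ring
      have : φ z1 = φ (z2 + s • w) := by
        rw [hadd, hsmul, hwfix, hss, hcc]
        abel
      have hz := hinj this
      rw [hz]
      simp only [hπ, map_add, map_smul]
      have : N.mkQ w = 0 := by
        rw [Submodule.mkQ_apply, Submodule.Quotient.mk_eq_zero]
        exact mem_span_singleton_self w
      rw [this, smul_zero, add_zero]
    set T' := T.map π with hT'
    have hT'stab : ∀ z ∈ T', φ' z ∈ T' := by
      rintro z hz
      obtain ⟨z0, hz0T, rfl⟩ := hz
      rw [hφ']
      exact ⟨φ z0, hT _ hz0T, rfl⟩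
    have hrank : finrank Ω T' ≤ d := by
      have hf := LinearMap.finrank_range_add_finrank_ker (π ∘ₗ T.subtype)
      have hrange : LinearMap.range (π ∘ₗ T.subtype) = T' := by
        rw [LinearMap.range_comp, Submodule.range_subtype]
      have hker : 0 < finrank Ω (LinearMap.ker (π ∘ₗ T.subtype)) := by
        rw [Module.finrank_pos_iff]
        refine ⟨⟨⟨w, hwT⟩, ?_⟩, 0, ?_⟩
        · simp only [LinearMap.mem_ker, LinearMap.comp_apply, Submodule.subtype_apply, hπ,
            Submodule.mkQ_apply, Submodule.Quotient.mk_eq_zero]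
          exact mem_span_singleton_self w
        · intro h
          apply hw0
          simpa using congrArg Subtype.val (congrArg Subtype.val h)
      rw [hrange] at hf
      omega
    have hIH := ih φ' hadd' hsmul' hinj' T' hT'stab hrank
    -- lift fixed points
    have hlift : {z | z ∈ T' ∧ φ' z = z} ⊆ ↑(Submodule.map π (span Ω {z | z ∈ T ∧ φ z = z})) := by
      rintro u ⟨huT', hufix⟩
      obtain ⟨z0, hz0T, rfl⟩ := huT'
      rw [hφ'] at hufix
      have h1 : φ z0 - z0 ∈ N := (Submodule.Quotient.eq N).mp (by simpa [hπ] using hufix)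
      obtain ⟨cc, hcc⟩ := Submodule.mem_span_singleton.mp h1
      obtain ⟨s, hs⟩ := exists_artin_schreier (Ω := Ω) cc
      refine ⟨z0 + s • w, ?_, ?_⟩
      · apply subset_span
        constructor
        · exact T.add_mem hz0T (T.smul_mem _ hwT)
        · rw [hadd, hsmul, hwfix]
          have hφz0 : φ z0 = z0 + cc • w := by rw [hcc]; abel
          have hcs : cc + s * s = s := by linear_combination hs
          rw [hφz0, add_assoc, ← add_smul, hcs]
      · simp only [hπ, map_add, map_smul]
        have : N.mkQ w = 0 := by
          rw [Submodule.mkQ_apply, Submodule.Quotient.mk_eq_zero]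
          exact mem_span_singleton_self w
        rw [this, smul_zero, add_zero]
    intro z hz
    have h1 : π z ∈ T' := ⟨z, hz, rfl⟩
    have h2 : π z ∈ Submodule.map π (span Ω {z | z ∈ T ∧ φ z = z}) := by
      have := hIH h1
      have hle : span Ω {z | z ∈ T' ∧ φ' z = z}
          ≤ Submodule.map π (span Ω {z | z ∈ T ∧ φ z = z}) := span_le.mpr hlift
      exact hle this
    obtain ⟨s', hs', hπs'⟩ := h2
    have h3 : z - s' ∈ N := (Submodule.Quotient.eq N).mp (by simpa [hπ] using hπs'.symm)
    obtain ⟨cc, hcc⟩ := Submodule.mem_span_singleton.mp h3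
    have hzz : z = s' + cc • w := by rw [hcc]; abel
    rw [hzz]
    apply Submodule.add_mem _ hs'
    exact smul_mem _ _ (subset_span ⟨hwT, hwfix⟩)

lemma descent {M : Type u} [AddCommGroup M] [Module Ω M] [FiniteDimensional Ω M] (φ : M → M)
    (hadd : ∀ a b, φ (a + b) = φ a + φ b)
    (hsmul : ∀ (c : Ω) (a : M), φ (c • a) = (c * c) • φ a)
    (hinj : Function.Injective φ)
    (T : Submodule Ω M) (hT : ∀ z ∈ T, φ z ∈ T) :
    T = span Ω {z | z ∈ T ∧ φ z = z} := by
  apply le_antisymm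
  · exact descent_aux (finrank Ω T) φ hadd hsmul hinj T hT le_rfl
  · rw [span_le]
    intro z hz
    exact hz.1
end D


section E
variable (n : ℕ) (Ω : Type*) [Field Ω] [Algebra (ZMod 2) Ω]

lemma charTwo : CharP Ω 2 :=
  charP_of_injective_ringHom (algebraMap (ZMod 2) Ω).injective 2

variable {n Ω}

/-- the coordinatewise Frobenius -/
noncomputable def frob : (Fin n → Ω) → (Fin n → Ω) := fun z j => z j ^ 2

lemma frob_add (a b : Fin n → Ω) : frob (a + b) = frob a + frob b := by
  haveI := charTwo Ω
  funext j
  simp only [frob, Pi.add_apply]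
  exact CharTwo.add_sq _ _

lemma frob_smul (c : Ω) (a : Fin n → Ω) : frob (c • a) = (c * c) • frob a := by
  funext j
  simp only [frob, Pi.smul_apply, smul_eq_mul]
  ring

lemma frob_inj : Function.Injective (frob (n := n) (Ω := Ω)) := by
  haveI := charTwo Ω
  intro a b hab
  funext j
  have h : a j ^ 2 = b j ^ 2 := congrFun hab j
  have h2 : (a j - b j) ^ 2 = 0 := by
    rw [CharTwo.sub_eq_add, CharTwo.add_sq, h, ← CharTwo.add_sq, CharTwo.add_self_eq_zero]
    simp
  have := pow_eq_zero_iff (n := 2) (by norm_num) |>.mp h2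
  linear_combination this

/-- the embedding of F2-points -/
noncomputable def emb : (Fin n → ZMod 2) → (Fin n → Ω) := fun w i => algebraMap (ZMod 2) Ω (w i)

lemma zmod2_cases (x : ZMod 2) : x = 0 ∨ x = 1 := by
  fin_cases x
  · exact Or.inl rfl
  · exact Or.inr rfl

lemma frob_emb (w : Fin n → ZMod 2) : frob (emb (Ω := Ω) w) = emb w := by
  funext j
  simp only [frob, emb]
  rcases zmod2_cases (w j) with h | h <;> simp [h]

lemma fixed_iff_emb (z : Fin n → Ω) : frob z = z ↔ ∃ w : Fin n → ZMod 2, emb (Ω := Ω) w = z := by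
  classical
  constructor
  · intro h
    have hco : ∀ j, z j = 0 ∨ z j = 1 := by
      intro j
      have : z j ^ 2 = z j := congrFun h j
      have h2 : z j * (z j - 1) = 0 := by linear_combination this
      rcases mul_eq_zero.mp h2 with h3 | h3
      · exact Or.inl h3
      · exact Or.inr (by linear_combination h3)
    refine ⟨fun j => if z j = 0 then 0 else 1, ?_⟩
    funext j
    simp only [emb]
    rcases hco j with h3 | h3
    · simp [h3]
    · rw [h3]
      have : z j ≠ 0 := by rw [h3]; exact one_ne_zero
      simp [this]
  · rintro ⟨w, rfl⟩
    exact frob_emb w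

lemma frob_iterate_apply (z : Fin n → Ω) (l : ℕ) (j : Fin n) :
    (frob^[l] z) j = z j ^ (2 ^ l) := by
  induction l generalizing z with
  | zero => simp
  | succ l ih =>
    rw [Function.iterate_succ_apply, ih (frob z)]
    simp only [frob]
    rw [← pow_mul, pow_succ, mul_comm 2 (2^l), pow_mul]

/-- span of F2-points is Frobenius stable -/
lemma span_emb_stable (S : Set (Fin n → ZMod 2)) :
    ∀ z ∈ span Ω (emb (Ω := Ω) '' S), frob z ∈ span Ω (emb (Ω := Ω) '' S) := by
  intro z hz
  induction hz using Submodule.span_induction with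
  | mem x hx =>
    obtain ⟨w, hw, rfl⟩ := hx
    rw [frob_emb]
    exact subset_span ⟨w, hw, rfl⟩
  | zero =>
    have : frob (0 : Fin n → Ω) = 0 := by
      funext j; simp [frob]
    rw [this]; exact zero_mem _
  | add x y _ _ hx hy => rw [frob_add]; exact add_mem hx hy
  | smul c x _ hx => rw [frob_smul]; exact smul_mem _ _ hx
end E


section F
variable {n : ℕ} {Ω : Type*} [Field Ω] [Algebra (ZMod 2) Ω]

lemma emb_linearIndependent {ι : Type*} [Fintype ι] [DecidableEq ι]
    (v : ι → (Fin n → ZMod 2)) (hv : LinearIndependent (ZMod 2) v) :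
    LinearIndependent Ω (fun k => emb (Ω := Ω) (v k)) := by
  classical
  set p := span (ZMod 2) (Set.range v) with hp
  obtain ⟨q, hpq⟩ := Submodule.exists_isCompl p
  set b := Basis.span hv with hb
  set pr := p.linearProjOfIsCompl q hpq with hpr
  set g : ι → (Fin n → ZMod 2) →ₗ[ZMod 2] ZMod 2 := fun k => (b.coord k) ∘ₗ pr with hg
  have hgv : ∀ k k', g k (v k') = if k' = k then 1 else 0 := by
    intro k k'
    have h1 : pr (v k') = b k' := by
      have h2 : (b k' : Fin n → ZMod 2) = v k' := congrArg Subtype.val (Module.Basis.span_apply hv k')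
      rw [← h2]
      exact p.linearProjOfIsCompl_apply_left hpq (b k')
    simp only [hg, LinearMap.comp_apply, h1, Basis.coord_apply, Basis.repr_self]
    exact Finsupp.single_apply
  set G : ι → (Fin n → Ω) →ₗ[Ω] Ω := fun k =>
    ∑ i, (algebraMap (ZMod 2) Ω (g k (Pi.single i 1))) • LinearMap.proj i with hG
  have hGemb : ∀ k w, G k (emb (Ω := Ω) w) = algebraMap (ZMod 2) Ω (g k w) := by
    intro k w
    have hw : w = ∑ i, Pi.single i (w i) := (Finset.univ_sum_single w).symm
    have h1 : g k w = ∑ i, w i * g k (Pi.single i 1) := by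
      conv_lhs => rw [hw]
      rw [map_sum]
      apply Finset.sum_congr rfl
      intro i _
      have : Pi.single i (w i) = w i • (Pi.single i 1 : Fin n → ZMod 2) := by
        funext j
        simp [Pi.single_apply, Pi.smul_apply, mul_ite]
      rw [this, map_smul, smul_eq_mul]
    rw [h1, map_sum]
    simp only [hG, LinearMap.sum_apply, LinearMap.smul_apply, LinearMap.proj_apply,
      smul_eq_mul]
    apply Finset.sum_congr rfl
    intro i _
    rw [map_mul]
    simp only [emb]
    ring
  rw [Fintype.linearIndependent_iff]
  intro c hc k
  have := congrArg (G k) hc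
  rw [map_sum, map_zero] at this
  simp only [map_smul, smul_eq_mul, hGemb, hgv] at this
  rw [Finset.sum_congr rfl (fun k' _ => by
    rw [show (algebraMap (ZMod 2) Ω) (if k' = k then 1 else 0)
        = if k' = k then (1:Ω) else 0 by split <;> simp])] at this
  simpa using this
end F


/-- The right radical of the bilinear form on `(ZMod 2)ⁿ` given by a matrix `Bm`. -/
noncomputable def radRight (n : ℕ) (Bm : Matrix (Fin n) (Fin n) (ZMod 2)) :
    Submodule (ZMod 2) (Fin n → ZMod 2) where
  carrier := {y | ∀ x : Fin n → ZMod 2, ∑ i, ∑ j, x i * Bm i j * y j = 0}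
  add_mem' := by
    intro a b ha hb x
    have h1 := ha x
    have h2 := hb x
    simp only [Pi.add_apply, mul_add, Finset.sum_add_distrib]
    rw [h1, h2, add_zero]
  zero_mem' := by
    intro x
    simp
  smul_mem' := by
    intro c y hy x
    simp only [Set.mem_setOf_eq, Pi.smul_apply, smul_eq_mul]
    have : (∑ i, ∑ j, x i * Bm i j * (c * y j)) = c * ∑ i, ∑ j, x i * Bm i j * y j := by
      rw [Finset.mul_sum]
      exact Finset.sum_congr rfl fun i _ => by
        rw [Finset.mul_sum]
        exact Finset.sum_congr rfl fun j _ => by ring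
    rw [this, hy x, mul_zero]

section G
variable {n : ℕ} (Bm : Matrix (Fin n) (Fin n) (ZMod 2)) {Ω : Type*} [Field Ω] [Algebra (ZMod 2) Ω]

lemma map_apply_sq (i j : Fin n) :
    (algebraMap (ZMod 2) Ω (Bm i j)) ^ 2 = algebraMap (ZMod 2) Ω (Bm i j) := by
  rcases zmod2_cases (Bm i j) with h | h <;> simp [h]

lemma mem_rOmega_iff (z : Fin n → Ω) :
    z ∈ LinearMap.ker (Bm.map (algebraMap (ZMod 2) Ω)).mulVecLin
      ↔ ∀ i, ∑ j, algebraMap (ZMod 2) Ω (Bm i j) * z j = 0 := by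
  rw [LinearMap.mem_ker]
  constructor
  · intro hz i
    have := congrFun hz i
    simpa [Matrix.mulVecLin_apply, Matrix.mulVec, dotProduct, Matrix.map_apply] using this
  · intro hz
    funext i
    simpa [Matrix.mulVecLin_apply, Matrix.mulVec, dotProduct, Matrix.map_apply] using hz i

lemma rOmega_frob_stable :
    ∀ z ∈ LinearMap.ker (Bm.map (algebraMap (ZMod 2) Ω)).mulVecLin,
      frob z ∈ LinearMap.ker (Bm.map (algebraMap (ZMod 2) Ω)).mulVecLin := by
  haveI := charTwo Ω
  intro z hz
  rw [mem_rOmega_iff] at hz ⊢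
  intro i
  have hsq : ∑ j, algebraMap (ZMod 2) Ω (Bm i j) * (z j) ^ 2
      = (∑ j, algebraMap (ZMod 2) Ω (Bm i j) * z j) ^ 2 := by
    rw [CharTwo.sum_sq]
    exact Finset.sum_congr rfl fun j _ => by rw [mul_pow, map_apply_sq]
  show ∑ j, algebraMap (ZMod 2) Ω (Bm i j) * (z j) ^ 2 = 0
  rw [hsq, hz i]
  simp

lemma emb_mem_rOmega {w : Fin n → ZMod 2} (hw : w ∈ radRight n Bm) :
    emb (Ω := Ω) w ∈ LinearMap.ker (Bm.map (algebraMap (ZMod 2) Ω)).mulVecLin := by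
  rw [mem_rOmega_iff]
  intro i
  have hx : ∀ x : Fin n → ZMod 2, ∑ i', ∑ j, x i' * Bm i' j * w j = 0 := hw
  have h0 : ∑ j, Bm i j * w j = 0 := by
    have h1 := hx (Pi.single i 1)
    rw [Finset.sum_eq_single i] at h1
    · rw [← h1]
      exact Finset.sum_congr rfl fun j _ => by rw [Pi.single_eq_same, one_mul]
    · intro i' _ hne
      rw [Finset.sum_eq_zero]
      intro j _
      rw [Pi.single_eq_of_ne hne, zero_mul, zero_mul]
    · intro habs
      exact absurd (Finset.mem_univ i) habs
  have := congrArg (algebraMap (ZMod 2) Ω) h0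
  rw [map_sum, map_zero] at this
  rw [← this]
  exact Finset.sum_congr rfl fun j _ => by rw [map_mul]; rfl

lemma finrank_rad_le [IsAlgClosed Ω] :
    Module.finrank (ZMod 2) (radRight n Bm)
      ≤ Module.finrank Ω (LinearMap.ker (Bm.map (algebraMap (ZMod 2) Ω)).mulVecLin) := by
  classical
  set b := Module.finBasis (ZMod 2) (radRight n Bm) with hb
  have hindF2 : LinearIndependent (ZMod 2) (fun k => ((b k : radRight n Bm) : Fin n → ZMod 2)) := by
    have := b.linearIndependent.map' (radRight n Bm).subtype (Submodule.ker_subtype _)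
    exact this
  have hind := emb_linearIndependent (Ω := Ω) _ hindF2
  have := card_le_finrank_of_mem (Ω := Ω)
    (LinearMap.ker (Bm.map (algebraMap (ZMod 2) Ω)).mulVecLin)
    (fun k => emb (Ω := Ω) ((b k : radRight n Bm) : Fin n → ZMod 2))
    (fun k => emb_mem_rOmega Bm (b k).2) hind
  simpa using this
end G
/-- the zero set, in `V_Ω × V_Ω`, of the polynomials
`B(x,y), B(x,y²), …, B(x,y^(2^(h−1)))` (where `h = n − dim rad_r(B)`) is the union over
all `F₂`-subspaces `W ⊆ V` of `W_Ω^⊥ × W_Ω`. -/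
theorem variety_of_frobenius_twisted_forms (n : ℕ) (Bm : Matrix (Fin n) (Fin n) (ZMod 2))
    (Ω : Type*) [Field Ω] [Algebra (ZMod 2) Ω] [IsAlgClosed Ω] :
    {p : (Fin n → Ω) × (Fin n → Ω) |
        ∀ l < n - Module.finrank (ZMod 2) (radRight n Bm),
          ∑ i, ∑ j, p.1 i * algebraMap (ZMod 2) Ω (Bm i j) * (p.2 j) ^ (2 ^ l) = 0}
      = ⋃ W : Submodule (ZMod 2) (Fin n → ZMod 2),
          ({x : Fin n → Ω |
              ∀ y ∈ Submodule.span Ω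
                ((fun w i => algebraMap (ZMod 2) Ω (w i)) '' (W : Set (Fin n → ZMod 2))),
              ∑ i, ∑ j, x i * algebraMap (ZMod 2) Ω (Bm i j) * y j = 0} ×ˢ
            (Submodule.span Ω
              ((fun w i => algebraMap (ZMod 2) Ω (w i)) '' (W : Set (Fin n → ZMod 2))) :
                Set (Fin n → Ω))) := by
  classical
  have hfun : (fun (w : Fin n → ZMod 2) (i : Fin n) => algebraMap (ZMod 2) Ω (w i))
      = emb (Ω := Ω) := rfl
  ext p
  obtain ⟨x, y⟩ := p
  simp only [Set.mem_setOf_eq, Set.mem_iUnion, Set.mem_prod, SetLike.mem_coe, hfun]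
  constructor
  · -- hard direction
    intro hxy
    set r := LinearMap.ker (Bm.map (algebraMap (ZMod 2) Ω)).mulVecLin with hr
    set ykit : ℕ → (Fin n → Ω) := fun l => frob^[l] y with hykit
    set L : (Fin n → Ω) →ₗ[Ω] Ω :=
      ∑ j, (∑ i, x i * algebraMap (ZMod 2) Ω (Bm i j)) • LinearMap.proj j with hLdef
    have hL : ∀ z : Fin n → Ω,
        L z = ∑ i, ∑ j, x i * algebraMap (ZMod 2) Ω (Bm i j) * z j := by
      intro z
      rw [hLdef]
      simp only [LinearMap.sum_apply, LinearMap.smul_apply, LinearMap.proj_apply, smul_eq_mul]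
      rw [Finset.sum_comm]
      exact Finset.sum_congr rfl fun i _ => by rw [Finset.sum_mul]
    have hrL : ∀ z ∈ r, L z = 0 := by
      intro z hz
      rw [hL]
      rw [hr, mem_rOmega_iff] at hz
      have : ∀ i, ∑ j, x i * algebraMap (ZMod 2) Ω (Bm i j) * z j
          = x i * ∑ j, algebraMap (ZMod 2) Ω (Bm i j) * z j := by
        intro i
        rw [Finset.mul_sum]
        exact Finset.sum_congr rfl fun j _ => by ring
      rw [Finset.sum_congr rfl fun i _ => this i]
      exact Finset.sum_eq_zero fun i _ => by rw [hz i, mul_zero]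
    -- key : find k ≤ h with a dependency modulo r
    have hkey : ∃ k, k ≤ n - Module.finrank (ZMod 2) (radRight n Bm) ∧
        ykit k ∈ Submodule.span Ω (Set.range fun i : Fin k => ykit i) ⊔ r := by
      by_contra hcon
      push_neg at hcon
      set π := r.mkQ with hπ
      have hnotmem : ∀ i < (n - Module.finrank (ZMod 2) (radRight n Bm)) + 1,
          π (ykit i) ∉ Submodule.span Ω (Set.range fun j : Fin i => π (ykit j)) := by
        intro i hi hmem
        have hi' : i ≤ n - Module.finrank (ZMod 2) (radRight n Bm) := by omega
        have hcomp : (fun j : Fin i => π (ykit j)) = π ∘ (fun j : Fin i => ykit j) := rfl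
        rw [hcomp, Set.range_comp, Submodule.span_image] at hmem
        obtain ⟨u, hu, huy⟩ := hmem
        have hmem2 : ykit i - u ∈ r :=
          (Submodule.Quotient.eq r).mp (by simpa [hπ, Submodule.mkQ_apply] using huy.symm)
        exact hcon i hi' (Submodule.mem_sup.mpr ⟨u, hu, ykit i - u, hmem2, by abel⟩)
      have hind := li_of_not_mem_span (Ω := Ω) (fun l => π (ykit l))
        ((n - Module.finrank (ZMod 2) (radRight n Bm)) + 1) hnotmem
      have hcard : (n - Module.finrank (ZMod 2) (radRight n Bm)) + 1
          ≤ Module.finrank Ω ((Fin n → Ω) ⧸ r) := by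
        simpa using hind.fintype_card_le_finrank
      have hq := Submodule.finrank_quotient_add_finrank r
      have hpi : Module.finrank Ω (Fin n → Ω) = n := by
        simp [Module.finrank_pi]
      have hrge : Module.finrank (ZMod 2) (radRight n Bm) ≤ Module.finrank Ω r :=
        finrank_rad_le (Ω := Ω) Bm
      rw [hpi] at hq
      omega
    obtain ⟨k, hk, hkmem⟩ := hkey
    set S := Submodule.span Ω ((Set.range fun i : Fin k => ykit i) ∪ ↑r) with hS
    have hSsup : Submodule.span Ω (Set.range fun i : Fin k => ykit i) ⊔ r = S := by
      rw [hS, Submodule.span_union, Submodule.span_eq r]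
    have hkS : ykit k ∈ S := by rw [← hSsup]; exact hkmem
    have hfr : ∀ l : ℕ, frob (ykit l) = ykit (l + 1) :=
      fun l => (Function.iterate_succ_apply' frob l y).symm
    have hSstab : ∀ z ∈ S, frob z ∈ S := by
      intro z hz
      induction hz using Submodule.span_induction with
      | mem z hz =>
        rcases hz with ⟨i, rfl⟩ | hz
        · rw [hfr]
          rcases Nat.lt_or_ge ((i : ℕ) + 1) k with hlt | hge
          · exact Submodule.subset_span (Or.inl ⟨⟨(i : ℕ) + 1, hlt⟩, rfl⟩)
          · have hik : (i : ℕ) + 1 = k := by have := i.isLt; omega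
            rw [hik]; exact hkS
        · exact Submodule.subset_span (Or.inr (rOmega_frob_stable Bm z hz))
      | zero =>
        rw [show frob (0 : Fin n → Ω) = 0 from funext fun j => by simp [frob]]
        exact zero_mem _
      | add a b _ _ ha hb => rw [frob_add]; exact add_mem ha hb
      | smul c a _ ha => rw [frob_smul]; exact Submodule.smul_mem _ _ ha
    have hallS : ∀ l, ykit l ∈ S := by
      intro l
      induction l with
      | zero =>
        rcases Nat.eq_zero_or_pos k with h0 | hpos
        · rw [show (0 : ℕ) = k from h0.symm]; exact hkS
        · exact Submodule.subset_span (Or.inl ⟨⟨0, hpos⟩, rfl⟩)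
      | succ l ih => rw [← hfr]; exact hSstab _ ih
    have hLS : ∀ z ∈ S, L z = 0 := by
      have hle : S ≤ LinearMap.ker L := by
        rw [hS, Submodule.span_le]
        rintro z (⟨i, rfl⟩ | hz)
        · rw [SetLike.mem_coe, LinearMap.mem_ker, hL]
          have hiy := hxy (i : ℕ) (lt_of_lt_of_le i.isLt hk)
          rw [← hiy]
          refine Finset.sum_congr rfl fun i' _ => Finset.sum_congr rfl fun j _ => ?_
          simp only [hykit, frob_iterate_apply]
        · rw [SetLike.mem_coe, LinearMap.mem_ker]
          exact hrL z hz
      exact fun z hz => LinearMap.mem_ker.mp (hle hz)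
    set T := Submodule.span Ω (Set.range ykit ∪ ↑r) with hTdef
    have hTstab : ∀ z ∈ T, frob z ∈ T := by
      intro z hz
      induction hz using Submodule.span_induction with
      | mem z hz =>
        rcases hz with ⟨l, rfl⟩ | hz
        · rw [hfr]; exact Submodule.subset_span (Or.inl ⟨l + 1, rfl⟩)
        · exact Submodule.subset_span (Or.inr (rOmega_frob_stable Bm z hz))
      | zero =>
        rw [show frob (0 : Fin n → Ω) = 0 from funext fun j => by simp [frob]]
        exact zero_mem _
      | add a b _ _ ha hb => rw [frob_add]; exact add_mem ha hb
      | smul c a _ ha => rw [frob_smul]; exact Submodule.smul_mem _ _ ha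
    have hdesc := descent (Ω := Ω) frob frob_add frob_smul frob_inj T hTstab
    set W : Submodule (ZMod 2) (Fin n → ZMod 2) :=
      { carrier := {w | emb (Ω := Ω) w ∈ T}
        add_mem' := by
          intro a b ha hb
          simp only [Set.mem_setOf_eq] at ha hb ⊢
          have hab : emb (Ω := Ω) (a + b) = emb a + emb b := by
            funext i; simp [emb, map_add]
          rw [hab]
          exact add_mem ha hb
        zero_mem' := by
          simp only [Set.mem_setOf_eq]
          have h0 : emb (Ω := Ω) (0 : Fin n → ZMod 2) = 0 := by funext i; simp [emb]
          rw [h0]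
          exact zero_mem _
        smul_mem' := by
          intro c w hw
          simp only [Set.mem_setOf_eq] at hw ⊢
          rcases zmod2_cases c with rfl | rfl
          · rw [zero_smul]
            have h0 : emb (Ω := Ω) (0 : Fin n → ZMod 2) = 0 := by funext i; simp [emb]
            rw [h0]
            exact zero_mem _
          · rw [one_smul]; exact hw } with hWdef
    have hWT : Submodule.span Ω (emb (Ω := Ω) '' ↑W) = T := by
      apply le_antisymm
      · rw [Submodule.span_le]
        rintro z ⟨w, hw, rfl⟩
        exact hw
      · nth_rewrite 1 [hdesc]
        rw [Submodule.span_le]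
        rintro z ⟨hzT, hzfix⟩
        obtain ⟨w, rfl⟩ := (fixed_iff_emb z).mp hzfix
        exact Submodule.subset_span ⟨w, hzT, rfl⟩
    refine ⟨W, ?_, ?_⟩
    · intro y' hy'
      rw [hWT] at hy'
      have hLT : T ≤ LinearMap.ker L := by
        rw [hTdef, Submodule.span_le]
        rintro z (⟨l, rfl⟩ | hz)
        · rw [SetLike.mem_coe, LinearMap.mem_ker]
          exact hLS _ (hallS l)
        · rw [SetLike.mem_coe, LinearMap.mem_ker]
          exact hrL z hz
      have := LinearMap.mem_ker.mp (hLT hy')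
      rw [hL] at this
      exact this
    · rw [hWT]
      exact Submodule.subset_span (Or.inl ⟨0, rfl⟩)
  · -- easy direction
    rintro ⟨W, hxW, hyW⟩
    intro l hl
    clear hl
    have hstab := span_emb_stable (Ω := Ω) (↑W : Set (Fin n → ZMod 2))
    have hyl : frob^[l] y ∈ Submodule.span Ω (emb (Ω := Ω) '' ↑W) := by
      induction l with
      | zero => exact hyW
      | succ l ih =>
        rw [Function.iterate_succ_apply']
        exact hstab _ ih
    have hx0 := hxW _ hyl
    rw [← hx0]
    refine Finset.sum_congr rfl fun i _ => Finset.sum_congr rfl fun j _ => ?_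
    rw [frob_iterate_apply]
end

section
/- The sequence consisting of u_1 = Σ_{i=1}^{m+1} x_i, u_2 = Σ_{i=1}^m y_i, and the elements s_l = Σ_{i=1}^m x_i y_i^(2^l) for l = 0, 1, …, m−2 is a regular sequence in F_2[x_1, y_1, …, x_m, y_m, x_{m+1}]. -/
set_option linter.unusedSectionVars false
set_option maxHeartbeats 1600000

open MvPolynomial Finsupp

namespace OddCaseAux

/-- `v' i = ∑_{j<i} 9·8^j` -/
def vp (i : ℕ) : ℕ := ∑ j ∈ Finset.range i, 9 * 8 ^ j

lemma vp_id (i : ℕ) : 7 * vp i + 9 = 9 * 8 ^ i := by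
  induction i with
  | zero => simp [vp]
  | succ i ih =>
    rw [vp, Finset.sum_range_succ, ← vp]
    ring_nf
    ring_nf at ih
    omega
    
lemma vp_mono {i j : ℕ} (h : i ≤ j) : vp i ≤ vp j := by
  unfold vp
  exact Finset.sum_le_sum_of_subset (Finset.range_subset_range.2 h)

/-- case i < l -/
lemma core_lt {i l : ℕ} (h : i < l) :
    vp l + 2 ^ (l + 1) * 4 ^ i < vp i + 2 ^ (l + 1) * 4 ^ l := by
  have h7 := vp_id l
  have hpow : 4 * 4 ^ i ≤ 4 ^ l := by
    calc 4 * 4 ^ i = 4 ^ (i + 1) := by ring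
    _ ≤ 4 ^ l := Nat.pow_le_pow_right (by norm_num) h
  have h8 : (8 : ℕ) ^ l = 2 ^ l * 4 ^ l := by
    rw [show (8 : ℕ) = 2 * 4 by norm_num, mul_pow]
  have hsplit : 2 ^ (l + 1) * 4 ^ i = 2 * (2 ^ l * 4 ^ i) := by ring
  have hsplit2 : 2 ^ (l + 1) * 4 ^ l = 2 * (2 ^ l * 4 ^ l) := by ring
  have hkey : 2 ^ l * (4 * 4 ^ i) ≤ 2 ^ l * 4 ^ l := Nat.mul_le_mul_left _ hpow
  rw [h8] at h7
  rw [hsplit, hsplit2]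
  set X := 2 ^ l * 4 ^ i with hX
  set Y := 2 ^ l * 4 ^ l with hY
  have hkey' : 4 * X ≤ Y := by rw [hX, hY]; calc 4 * (2^l * 4^i) = 2^l * (4 * 4^i) := by ring
                                                _ ≤ 2^l * 4^l := hkey
  omega

/-- case l < i -/
lemma core_gt {i l : ℕ} (h : l < i) :
    vp l + 2 ^ (l + 1) * 4 ^ i < vp i := by
  have h7l := vp_id l
  have h7i := vp_id i
  have h2 : 2 ^ (l + 1) ≤ 2 ^ i := Nat.pow_le_pow_right (by norm_num) h
  have h8 : 8 * 8 ^ l ≤ 8 ^ i := by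
    calc 8 * 8 ^ l = 8 ^ (l + 1) := by ring
    _ ≤ 8 ^ i := Nat.pow_le_pow_right (by norm_num) h
  have hT : 2 ^ (l + 1) * 4 ^ i ≤ 8 ^ i := by
    calc 2 ^ (l + 1) * 4 ^ i ≤ 2 ^ i * 4 ^ i := Nat.mul_le_mul_right _ h2
    _ = 8 ^ i := by rw [show (8:ℕ) = 2*4 by norm_num, mul_pow]
  have hQ : 1 ≤ 8 ^ i := Nat.one_le_two_pow.trans (Nat.pow_le_pow_left (by norm_num) i)
  omega

/-- the combined inequality needed for the `s_l` leading terms -/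
lemma core_ineq {m : ℕ} {i l : ℕ} (him : i < m) (hlm : l < m) (hne : i ≠ l) :
    (vp m - vp i) + 2 ^ l * (2 * 4 ^ i) < (vp m - vp l) + 2 ^ l * (2 * 4 ^ l) := by
  have hvi : vp i ≤ vp m := vp_mono him.le
  have hvl : vp l ≤ vp m := vp_mono hlm.le
  have hrw1 : 2 ^ l * (2 * 4 ^ i) = 2 ^ (l + 1) * 4 ^ i := by ring
  have hrw2 : 2 ^ l * (2 * 4 ^ l) = 2 ^ (l + 1) * 4 ^ l := by ring
  rw [hrw1, hrw2]
  rcases lt_or_gt_of_ne hne with hlt | hgt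
  · have := core_lt hlt
    omega
  · have := core_gt hgt
    omega


variable {σ : Type*} [DecidableEq σ]

local notation "R2" => MvPolynomial σ (ZMod 2)

lemma add_self (x : R2) : x + x = 0 := CharTwo.add_self_eq_zero x

lemma weight_single (w : σ → ℕ) (a : σ) (k : ℕ) :
    Finsupp.weight w (Finsupp.single a k) = k * w a := by
  simp [Finsupp.weight_apply, Finsupp.sum_single_index, smul_eq_mul]

/-- coprime (disjoint support) divisibility cancellation -/
lemma le_of_add_le_disjoint {u v μ : σ →₀ ℕ} (h : u ≤ μ + v)
    (hd : Disjoint u.support v.support) : u ≤ μ := by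
  intro x
  by_cases hx : u x = 0
  · simp [hx]
  · have hxs : x ∈ u.support := Finsupp.mem_support_iff.2 hx
    have hv : v x = 0 := by
      by_contra hvx
      exact (Finset.disjoint_left.1 hd hxs) (Finsupp.mem_support_iff.2 hvx)
    have := h x
    simpa [Finsupp.add_apply, hv] using this

lemma exists_support_mul {p q : R2} {ν : σ →₀ ℕ} (hν : ν ∈ (p * q).support) :
    ∃ a ∈ p.support, ∃ b ∈ q.support, a + b = ν := by
  rw [MvPolynomial.mem_support_iff, MvPolynomial.coeff_mul] at hν
  obtain ⟨⟨a, b⟩, hab, hne⟩ := Finset.exists_ne_zero_of_sum_ne_zero hν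
  rw [Finset.HasAntidiagonal.mem_antidiagonal] at hab
  exact ⟨a, MvPolynomial.mem_support_iff.2 fun h => hne (by simp [h]), b,
    MvPolynomial.mem_support_iff.2 fun h => hne (by simp [h]), hab⟩

lemma support_mul_monomial {p : R2} {u : σ →₀ ℕ} {ν : σ →₀ ℕ}
    (hν : ν ∈ (p * monomial u (1 : ZMod 2)).support) :
    u ≤ ν ∧ ν - u ∈ p.support := by
  rw [MvPolynomial.mem_support_iff, MvPolynomial.coeff_mul_monomial'] at hν
  by_cases h : u ≤ ν
  · refine ⟨h, ?_⟩
    rw [if_pos h] at hν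
    simpa [MvPolynomial.mem_support_iff] using fun hc => hν (by simp [hc])
  · simp [h] at hν

/-- Division by pairwise-coprime monomials, with support tracking. -/
lemma div_rep {n : ℕ} (u : Fin n → (σ →₀ ℕ)) (s : Finset (Fin n)) :
    ∀ (N : ℕ) (t : R2), t.support.card ≤ N → (∀ μ ∈ t.support, ∃ l ∈ s, u l ≤ μ) →
    ∃ a : Fin n → R2, (∀ l ∉ s, a l = 0) ∧
      t = ∑ l, a l * monomial (u l) 1 ∧
      ∀ l, ∀ ν ∈ (a l).support, ν + u l ∈ t.support := by
  intro N
  induction N with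
  | zero =>
    intro t hcard _
    have : t.support = ∅ := Finset.card_eq_zero.1 (Nat.le_zero.1 hcard)
    refine ⟨0, by simp, ?_, by simp⟩
    simp [MvPolynomial.support_eq_empty.1 this]
  | succ N ih =>
    intro t hcard hdiv
    by_cases ht : t.support = ∅
    · refine ⟨0, by simp, ?_, by simp⟩
      simp [MvPolynomial.support_eq_empty.1 ht]
    · obtain ⟨μ, hμ⟩ := Finset.nonempty_of_ne_empty ht
      obtain ⟨l, hls, hul⟩ := hdiv μ hμ
      set c := MvPolynomial.coeff μ t with hc
      set t' : R2 := t - monomial μ c with ht'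
      have hsupp' : t'.support = t.support.erase μ := by
        ext ν
        simp only [MvPolynomial.mem_support_iff, ht', MvPolynomial.coeff_sub,
          MvPolynomial.coeff_monomial, Finset.mem_erase]
        by_cases hνμ : ν = μ
        · subst hνμ; simp [hc]
        · simp [hνμ, Ne.symm hνμ, MvPolynomial.mem_support_iff,
            (by intro h; exact hνμ h.symm : ¬ μ = ν)]
      have hcard' : t'.support.card ≤ N := by
        rw [hsupp']
        have := Finset.card_erase_of_mem hμ
        omega
      obtain ⟨a', ha's, ha'sum, ha'supp⟩ := ih t' hcard' (by
        intro ν hν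
        rw [hsupp'] at hν
        exact hdiv ν (Finset.mem_of_mem_erase hν))
      refine ⟨fun l' => a' l' + if l' = l then monomial (μ - u l) c else 0, ?_, ?_, ?_⟩
      · intro l' hl'
        have h1 : a' l' = 0 := ha's l' hl'
        have h2 : l' ≠ l := fun h => hl' (h ▸ hls)
        simp [h1, h2]
      · have ht2 : t = t' + monomial μ c := by rw [ht']; ring
        rw [ht2, ha'sum]
        simp only [add_mul, Finset.sum_add_distrib]
        congr 1
        rw [Finset.sum_eq_single l (fun b _ hb => by simp [hb])
          (fun h => absurd (Finset.mem_univ l) h)]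
        rw [if_pos rfl, MvPolynomial.monomial_mul, mul_one, tsub_add_cancel_of_le hul]
      · intro l' ν hν
        have : ν ∈ (a' l').support ∨ ν ∈ (if l' = l then monomial (μ - u l) c else 0 : R2).support := by
          by_contra hcon
          push_neg at hcon
          rw [MvPolynomial.mem_support_iff] at hν
          exact hν (by
            have h1 := MvPolynomial.notMem_support_iff.1 hcon.1
            have h2 := MvPolynomial.notMem_support_iff.1 hcon.2
            simp [MvPolynomial.coeff_add, h1, h2])
        rcases this with h | h
        · have := ha'supp l' ν h
          rw [hsupp'] at this
          exact Finset.mem_of_mem_erase this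
        · by_cases hl'l : l' = l
          · subst hl'l
            rw [if_pos rfl] at h
            have : ν = μ - u l' := by
              by_contra hne
              rw [MvPolynomial.mem_support_iff, MvPolynomial.coeff_monomial,
                if_neg (fun h => hne h.symm)] at h
              exact h rfl
            subst this
            rw [tsub_add_cancel_of_le hul]
            exact hμ
          · rw [if_neg hl'l] at h; simp at h


lemma syz (w : σ → ℕ) (B : ℕ) : ∀ {n : ℕ} (u : Fin n → (σ →₀ ℕ)),
    (∀ l l', l ≠ l' → Disjoint (u l).support (u l').support) →
    ∀ t : Fin n → R2, (∀ l, ∀ μ ∈ (t l).support, weight w μ + weight w (u l) ≤ B) →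
    (∑ l, t l * monomial (u l) 1) = 0 →
    ∃ c : Fin n → Fin n → R2,
      (∀ l, c l l = 0) ∧ (∀ l l', c l l' = c l' l) ∧
      (∀ l', t l' = 0 → ∀ l, c l l' = 0) ∧
      (∀ l, t l = ∑ l', c l l' * monomial (u l') 1) ∧
      (∀ l l', ∀ ν ∈ (c l l').support,
        weight w ν + weight w (u l) + weight w (u l') ≤ B) := by
  intro n
  induction n with
  | zero =>
    intro u hdisj t ht hsum
    exact ⟨fun l => l.elim0, fun l => l.elim0, fun l => l.elim0, fun l => l.elim0,
      fun l => l.elim0, fun l => l.elim0⟩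
  | succ n ih =>
    intro u hdisj t ht hsum
    rw [Fin.sum_univ_castSucc] at hsum
    -- build `a` with the three properties
    obtain ⟨a, ⟨ha0, ha00⟩, hasum, hasupp⟩ :
        ∃ a : Fin n → R2, ((∀ l, t l.castSucc = 0 → a l = 0) ∧ (t (Fin.last n) = 0 → ∀ l, a l = 0)) ∧
          (t (Fin.last n) = ∑ l, a l * monomial (u l.castSucc) 1) ∧
          (∀ l, ∀ ν ∈ (a l).support, ν + u l.castSucc ∈ (t (Fin.last n)).support) := by
      by_cases htn : t (Fin.last n) = 0
      · exact ⟨0, ⟨fun _ _ => rfl, fun _ _ => rfl⟩, by simp [htn], by simp⟩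
      · set s : Finset (Fin n) := Finset.univ.filter (fun l => t l.castSucc ≠ 0) with hs
        have hneg : t (Fin.last n) * monomial (u (Fin.last n)) 1
            = - ∑ l : Fin n, t l.castSucc * monomial (u l.castSucc) 1 := by
          linear_combination hsum
        have hdiv : ∀ μ ∈ (t (Fin.last n)).support, ∃ l ∈ s, u l.castSucc ≤ μ := by
          intro μ hμ
          have hmem : μ + u (Fin.last n) ∈
              (t (Fin.last n) * monomial (u (Fin.last n)) 1).support := by
            rw [MvPolynomial.mem_support_iff, MvPolynomial.coeff_mul_monomial',
              if_pos (Finsupp.le_iff _ _ |>.2 fun i _ => by simp [Finsupp.add_apply])]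
            rw [add_tsub_cancel_right, mul_one]
            exact MvPolynomial.mem_support_iff.1 hμ
          rw [hneg, MvPolynomial.support_neg] at hmem
          have : MvPolynomial.coeff (μ + u (Fin.last n))
              (∑ l : Fin n, t l.castSucc * monomial (u l.castSucc) 1) ≠ 0 :=
            MvPolynomial.mem_support_iff.1 hmem
          rw [MvPolynomial.coeff_sum] at this
          obtain ⟨l, _, hl⟩ := Finset.exists_ne_zero_of_sum_ne_zero this
          have hmem2 : μ + u (Fin.last n) ∈ (t l.castSucc * monomial (u l.castSucc) 1).support :=
            MvPolynomial.mem_support_iff.2 hl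
          obtain ⟨hle, hsub⟩ := support_mul_monomial hmem2
          have hne : t l.castSucc ≠ 0 := by
            intro h0
            rw [h0] at hmem2; simp at hmem2
          refine ⟨l, by simp [hs, hne], ?_⟩
          exact le_of_add_le_disjoint hle
            (hdisj _ _ (by simp [Fin.ext_iff]; omega))
        obtain ⟨a, ha's, hasum, hasupp⟩ := div_rep (fun l => u l.castSucc) s
          (t (Fin.last n)).support.card (t (Fin.last n)) le_rfl hdiv
        exact ⟨a, ⟨fun l h0 => ha's l (by simp [hs, h0]), fun h0 => absurd h0 htn⟩, hasum, hasupp⟩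
    -- the modified t'
    set t' : Fin n → R2 := fun l => t l.castSucc + a l * monomial (u (Fin.last n)) 1 with ht'
    have hbound' : ∀ l, ∀ μ ∈ (t' l).support,
        weight w μ + weight w (u l.castSucc) ≤ B := by
      intro l μ hμ
      have : μ ∈ (t l.castSucc).support ∨ μ ∈ (a l * monomial (u (Fin.last n)) 1).support := by
        by_contra hcon
        push_neg at hcon
        have h1 := MvPolynomial.notMem_support_iff.1 hcon.1
        have h2 := MvPolynomial.notMem_support_iff.1 hcon.2
        rw [MvPolynomial.mem_support_iff] at hμ
        exact hμ (by simp [ht', MvPolynomial.coeff_add, h1, h2])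
      rcases this with h | h
      · exact ht _ μ h
      · obtain ⟨hle, hsub⟩ := support_mul_monomial h
        have htrack := hasupp l _ hsub
        have hB := ht (Fin.last n) _ htrack
        rw [map_add] at hB
        have hμeq : μ - u (Fin.last n) + u (Fin.last n) = μ := tsub_add_cancel_of_le hle
        have : weight w (μ - u (Fin.last n)) + weight w (u (Fin.last n)) = weight w μ := by
          rw [← map_add, hμeq]
        omega
    have hsum' : (∑ l : Fin n, t' l * monomial (u l.castSucc) 1) = 0 := by
      have expand : (∑ l : Fin n, t' l * monomial (u l.castSucc) 1)
          = (∑ l : Fin n, t l.castSucc * monomial (u l.castSucc) 1)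
            + (∑ l : Fin n, a l * monomial (u l.castSucc) 1) * monomial (u (Fin.last n)) 1 := by
        rw [Finset.sum_mul, ← Finset.sum_add_distrib]
        refine Finset.sum_congr rfl fun l _ => ?_
        rw [ht']; ring
      rw [expand, ← hasum, hsum]
    obtain ⟨c', hdiag', hsymm', hzero', hrep', hbnd'⟩ := ih (fun l => u l.castSucc)
      (fun l l' hne => hdisj _ _ (by simp [Fin.ext_iff]; exact fun h => hne (Fin.ext h)))
      t' hbound' hsum'
    -- assemble
    refine ⟨fun i => Fin.lastCases (Fin.lastCases 0 a)
        (fun i' => Fin.lastCases (a i') (fun j' => c' i' j')) i, ?_, ?_, ?_, ?_, ?_⟩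
    · intro l
      induction l using Fin.lastCases with
      | last => simp
      | cast i => simp [hdiag' i]
    · intro l l'
      induction l using Fin.lastCases with
      | last => induction l' using Fin.lastCases with
        | last => simp
        | cast j => simp
      | cast i => induction l' using Fin.lastCases with
        | last => simp
        | cast j => simp [hsymm' i j]
    · intro l' h0 l
      induction l' using Fin.lastCases with
      | last =>
        induction l using Fin.lastCases with
        | last => simp
        | cast i =>
          simp only [Fin.lastCases_castSucc, Fin.lastCases_last]
          exact ha00 h0 i
      | cast j =>
        have haj : a j = 0 := ha0 j h0
        have ht'j : t' j = 0 := by rw [ht']; simp [h0, haj]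
        induction l using Fin.lastCases with
        | last => simp [haj]
        | cast i => simp [hzero' j ht'j i]
    · intro l
      induction l using Fin.lastCases with
      | last =>
        rw [Fin.sum_univ_castSucc]
        simp only [Fin.lastCases_castSucc, Fin.lastCases_last]
        rw [hasum]; simp
      | cast i =>
        rw [Fin.sum_univ_castSucc]
        simp only [Fin.lastCases_castSucc, Fin.lastCases_last]
        rw [← hrep' i]
        simp only [ht']
        rw [add_assoc, add_self, add_zero]
    · intro l l' ν hν
      induction l using Fin.lastCases with
      | last =>
        induction l' using Fin.lastCases with
        | last => simp at hν
        | cast j =>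
          simp only [Fin.lastCases_castSucc, Fin.lastCases_last] at hν
          have htrack := hasupp j _ hν
          have hB := ht (Fin.last n) _ htrack
          rw [map_add] at hB
          omega
      | cast i =>
        induction l' using Fin.lastCases with
        | last =>
          simp only [Fin.lastCases_castSucc, Fin.lastCases_last] at hν
          have htrack := hasupp i _ hν
          have hB := ht (Fin.last n) _ htrack
          rw [map_add] at hB
          omega
        | cast j =>
          simp only [Fin.lastCases_castSucc] at hν
          have := hbnd' i j ν hν
          omega


lemma comp_mul (w : σ → ℕ) {f : R2} {u : σ →₀ ℕ}
    (hf1 : MvPolynomial.coeff u f = 1)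
    (hft : ∀ μ ∈ f.support, μ ≠ u → weight w μ < weight w u)
    {h : R2} {E : ℕ} (hh : ∀ μ ∈ h.support, weight w μ ≤ E) :
    weightedHomogeneousComponent w (E + weight w u) (h * f)
      = weightedHomogeneousComponent w E h * monomial u 1 := by
  apply MvPolynomial.ext; intro ν
  rw [coeff_weightedHomogeneousComponent, MvPolynomial.coeff_mul_monomial']
  by_cases hle : u ≤ ν
  · rw [if_pos hle, coeff_weightedHomogeneousComponent]
    have hadd : ν - u + u = ν := tsub_add_cancel_of_le hle
    have hwt : weight w (ν - u) + weight w u = weight w ν := by rw [← map_add, hadd]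
    by_cases hcase : weight w ν = E + weight w u
    · rw [if_pos hcase, if_pos (by omega), mul_one]
      rw [MvPolynomial.coeff_mul]
      rw [Finset.sum_eq_single ((ν - u, u) : (σ →₀ ℕ) × (σ →₀ ℕ))]
      · rw [hf1, mul_one]
      · rintro ⟨a, b⟩ hab hne
        rw [Finset.HasAntidiagonal.mem_antidiagonal] at hab
        by_cases hbu : b = u
        · have ha : a = ν - u := eq_tsub_of_add_eq (by rw [← hbu]; exact hab)
          exact absurd (by rw [ha, hbu]) hne
        · by_cases hbf : b ∈ f.support
          · by_cases haf : a ∈ h.support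
            · have h1 := hh a haf
              have h2 := hft b hbf hbu
              have h3 : weight w a + weight w b = weight w ν := by rw [← map_add, hab]
              omega
            · rw [MvPolynomial.notMem_support_iff.1 haf, zero_mul]
          · rw [MvPolynomial.notMem_support_iff.1 hbf, mul_zero]
      · intro hnot
        exact absurd (Finset.HasAntidiagonal.mem_antidiagonal.2 hadd) hnot
    · rw [if_neg hcase, if_neg (by omega), zero_mul]
  · rw [if_neg hle]
    by_cases hcase : weight w ν = E + weight w u
    · rw [if_pos hcase]
      rw [MvPolynomial.coeff_mul]
      apply Finset.sum_eq_zero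
      rintro ⟨a, b⟩ hab
      rw [Finset.HasAntidiagonal.mem_antidiagonal] at hab
      by_cases hbu : b = u
      · exact absurd (by rw [← hbu, ← hab]; exact le_add_self) hle
      · by_cases hbf : b ∈ f.support
        · by_cases haf : a ∈ h.support
          · have h1 := hh a haf
            have h2 := hft b hbf hbu
            have h3 : weight w a + weight w b = weight w ν := by rw [← map_add, hab]
            omega
          · rw [MvPolynomial.notMem_support_iff.1 haf, zero_mul]
        · rw [MvPolynomial.notMem_support_iff.1 hbf, mul_zero]
    · rw [if_neg hcase]

lemma key (w : σ → ℕ) {n : ℕ} (f : Fin n → R2) (u : Fin n → (σ →₀ ℕ))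
    (hcoeff : ∀ l, MvPolynomial.coeff (u l) (f l) = 1)
    (hlt : ∀ l, ∀ μ ∈ (f l).support, μ ≠ u l → weight w μ < weight w (u l))
    (hdisj : ∀ l l', l ≠ l' → Disjoint (u l).support (u l').support)
    (hpos : ∀ l, 0 < weight w (u l)) :
    ∀ B : ℕ, ∀ h : Fin n → R2,
      (∀ l, ∀ μ ∈ (h l).support, weight w μ + weight w (u l) ≤ B) →
      (∑ l, h l * f l) = 0 →
      ∀ j : Fin n, (∀ l, j < l → h l = 0) →
      h j ∈ Ideal.span (f '' {l | l < j}) := by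
  intro B
  induction B using Nat.strong_induction_on with
  | _ B ihB =>
  intro h hb hsum j hj
  by_cases hB0 : B = 0
  · have hj0 : h j = 0 := by
      rw [← MvPolynomial.support_eq_empty]
      by_contra hne
      obtain ⟨μ, hμ⟩ := Finset.nonempty_of_ne_empty hne
      have := hb j μ hμ
      have := hpos j
      omega
    rw [hj0]; exact Ideal.zero_mem _
  · set t : Fin n → R2 :=
      fun l => weightedHomogeneousComponent w (B - weight w (u l)) (h l) with htdef
    have hcoeff_t : ∀ l μ, MvPolynomial.coeff μ (t l) =
        if weight w μ = B - weight w (u l) then MvPolynomial.coeff μ (h l) else 0 := by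
      intro l μ
      simp only [htdef, coeff_weightedHomogeneousComponent]
    have hsupp_t : ∀ l, (t l).support ⊆ (h l).support := by
      intro l μ hμ
      rw [MvPolynomial.mem_support_iff, hcoeff_t] at hμ
      rw [MvPolynomial.mem_support_iff]
      intro h0; rw [h0] at hμ; simp at hμ
    have htzero : ∀ l, h l = 0 → t l = 0 := fun l h0 => by
      rw [htdef]; simp [h0]
    have hdB : ∀ l, h l ≠ 0 → weight w (u l) ≤ B := by
      intro l h0
      obtain ⟨μ, hμ⟩ := Finset.nonempty_of_ne_empty
        (fun hc => h0 (MvPolynomial.support_eq_empty.1 hc))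
      have := hb l μ hμ; omega
    have hcomp : ∀ l, weightedHomogeneousComponent w B (h l * f l)
        = t l * monomial (u l) 1 := by
      intro l
      by_cases h0 : h l = 0
      · rw [h0, htzero l h0]; simp
      · have hdlB := hdB l h0
        have hE : B - weight w (u l) + weight w (u l) = B := by omega
        have hcm := comp_mul w (hcoeff l) (hlt l) (h := h l) (E := B - weight w (u l))
          (fun μ hμ => by have := hb l μ hμ; omega)
        rw [hE] at hcm
        exact hcm
    have hteq : (∑ l, t l * monomial (u l) 1) = 0 := by
      rw [Finset.sum_congr rfl (fun l _ => (hcomp l).symm), ← map_sum, hsum, map_zero]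
    obtain ⟨c, hdiag, hsymm, hzero, hrep, hbnd⟩ := syz w B u hdisj t
      (fun l μ hμ => hb l μ (hsupp_t l hμ)) hteq
    set h' : Fin n → R2 := fun l => h l + ∑ l', c l l' * f l' with hh'
    have hsum' : (∑ l, h' l * f l) = 0 := by
      have expand : (∑ l, h' l * f l)
          = (∑ l, h l * f l) + ∑ p ∈ Finset.univ ×ˢ Finset.univ,
              (c p.1 p.2 * f p.2) * f p.1 := by
        calc (∑ l, h' l * f l)
            = ∑ l, (h l * f l + ∑ l', (c l l' * f l') * f l) := by
              refine Finset.sum_congr rfl fun l _ => ?_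
              simp only [hh']
              rw [add_mul, Finset.sum_mul]
          _ = (∑ l, h l * f l) + ∑ l, ∑ l', (c l l' * f l') * f l :=
              Finset.sum_add_distrib
          _ = _ := by rw [Finset.sum_product]
      rw [expand, hsum, zero_add]
      apply Finset.sum_involution (fun p _ => (p.2, p.1))
      · intro p hp
        have : c p.2 p.1 * f p.1 * f p.2 = c p.1 p.2 * f p.2 * f p.1 := by
          rw [hsymm p.1 p.2]; ring
        rw [this]; exact add_self _
      · intro p hp hne hcon
        apply hne
        have h12 : p.1 = p.2 := (congrArg Prod.fst hcon).symm
        rw [h12, hdiag, zero_mul, zero_mul]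
      · intro p hp; simp
      · intro p hp; rfl
    have hb' : ∀ l, ∀ μ ∈ (h' l).support, weight w μ + weight w (u l) ≤ B - 1 := by
      intro l μ hμ
      have hdecomp : h' l = (h l + t l) + (t l + ∑ l', c l l' * f l') := by
        simp only [hh']
        linear_combination -add_self (t l)
      rw [hdecomp] at hμ
      have : μ ∈ (h l + t l).support ∨ μ ∈ (t l + ∑ l', c l l' * f l').support := by
        by_contra hcon
        push_neg at hcon
        rw [MvPolynomial.mem_support_iff, MvPolynomial.coeff_add,
          MvPolynomial.notMem_support_iff.1 hcon.1,
          MvPolynomial.notMem_support_iff.1 hcon.2] at hμ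
        exact hμ (by ring)
      rcases this with hcase | hcase
      · rw [MvPolynomial.mem_support_iff, MvPolynomial.coeff_add, hcoeff_t] at hcase
        by_cases hwμ : weight w μ = B - weight w (u l)
        · rw [if_pos hwμ, CharTwo.add_self_eq_zero] at hcase
          exact absurd rfl hcase
        · rw [if_neg hwμ, add_zero] at hcase
          have hmem : μ ∈ (h l).support := MvPolynomial.mem_support_iff.2 hcase
          have h1 := hb l μ hmem
          have h2 := hdB l (fun h0 => by rw [h0] at hmem; simp at hmem)
          omega
      · have hrw : t l + ∑ l', c l l' * f l'
            = ∑ l', c l l' * (monomial (u l') 1 + f l') := by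
          rw [hrep l, ← Finset.sum_add_distrib]
          refine Finset.sum_congr rfl fun l' _ => by ring
        rw [hrw] at hcase
        have : MvPolynomial.coeff μ (∑ l', c l l' * (monomial (u l') 1 + f l')) ≠ 0 :=
          MvPolynomial.mem_support_iff.1 hcase
        rw [MvPolynomial.coeff_sum] at this
        obtain ⟨l', _, hl'⟩ := Finset.exists_ne_zero_of_sum_ne_zero this
        obtain ⟨α, hα, β, hβ, hαβ⟩ := exists_support_mul (MvPolynomial.mem_support_iff.2 hl')
        have hβlt : weight w β < weight w (u l') := by
          have hcβ : MvPolynomial.coeff β (monomial (u l') 1 + f l') ≠ 0 :=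
            MvPolynomial.mem_support_iff.1 hβ
          rw [MvPolynomial.coeff_add, MvPolynomial.coeff_monomial] at hcβ
          by_cases hβu : β = u l'
          · rw [if_pos (by rw [hβu]), hβu, hcoeff l', CharTwo.add_self_eq_zero] at hcβ
            exact absurd rfl hcβ
          · rw [if_neg (fun hh => hβu hh.symm), zero_add] at hcβ
            exact hlt l' β (MvPolynomial.mem_support_iff.2 hcβ) hβu
        have hbd := hbnd l l' α hα
        have hwμ : weight w μ = weight w α + weight w β := by rw [← hαβ, map_add]
        omega
    have hj' : ∀ l, j < l → h' l = 0 := by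
      intro l hl
      have h0 := hj l hl
      have ht0 := htzero l h0
      have hcrow : ∀ l', c l l' = 0 := fun l' => by
        rw [hsymm l l']; exact hzero l ht0 l'
      simp only [hh', h0]
      rw [Finset.sum_congr rfl (fun l' _ => by rw [hcrow l', zero_mul])]
      simp
    have ihres := ihB (B - 1) (by omega) h' hb' hsum' j hj'
    have hfinal : h j = h' j + ∑ l', c j l' * f l' := by
      simp only [hh']
      rw [add_assoc, add_self, add_zero]
    rw [hfinal]
    refine Ideal.add_mem _ ihres (Ideal.sum_mem _ fun l' _ => ?_)
    rcases lt_trichotomy l' j with hlt' | heq | hgt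
    · exact Ideal.mul_mem_left _ _ (Ideal.subset_span ⟨l', hlt', rfl⟩)
    · rw [heq, hdiag]; simp
    · have h0 := hj l' hgt
      rw [hzero l' (htzero l' h0) j, zero_mul]
      exact Ideal.zero_mem _


/-- The cancellation property needed for weak regularity. -/
lemma reg_step (w : σ → ℕ) {n : ℕ} (f : Fin n → R2) (u : Fin n → (σ →₀ ℕ))
    (hcoeff : ∀ l, MvPolynomial.coeff (u l) (f l) = 1)
    (hlt : ∀ l, ∀ μ ∈ (f l).support, μ ≠ u l → weight w μ < weight w (u l))
    (hdisj : ∀ l l', l ≠ l' → Disjoint (u l).support (u l').support)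
    (hpos : ∀ l, 0 < weight w (u l)) (j : Fin n) :
    ∀ g : R2, f j * g ∈ Ideal.span (f '' {l | l < j}) →
      g ∈ Ideal.span (f '' {l | l < j}) := by
  classical
  intro g hg
  have hg' : f j * g ∈ Submodule.span (MvPolynomial σ (ZMod 2)) (f '' {l | l < j}) := hg
  rw [Submodule.mem_span_set] at hg'
  obtain ⟨cf, hsupp, hsum⟩ := hg'
  set L : R2 → Fin n := fun y =>
    if hy : ∃ l : Fin n, l < j ∧ f l = y then Classical.choose hy else j with hLdef
  have hLprop : ∀ y ∈ cf.support, L y < j ∧ f (L y) = y := by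
    intro y hy
    obtain ⟨l, hl, hfl⟩ := hsupp hy
    have hex : ∃ l : Fin n, l < j ∧ f l = y := ⟨l, hl, hfl⟩
    rw [hLdef]
    simp only [dif_pos hex]
    exact Classical.choose_spec hex
  set h : Fin n → R2 := fun l =>
    (if l = j then g else 0) + ∑ y ∈ cf.support.filter (fun y => L y = l), cf y with hhdef
  have hfiber_empty : ∀ l : Fin n, ¬ (l < j) → l ≠ j →
      cf.support.filter (fun y => L y = l) = ∅ := by
    intro l hlj hlnej
    rw [Finset.filter_eq_empty_iff]
    intro y hy hLy
    have hP := (hLprop y hy).1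
    rw [hLy] at hP
    exact hlj hP
  have hhj : h j = g := by
    rw [hhdef]
    simp only [if_pos rfl]
    rw [Finset.filter_eq_empty_iff.2 (fun y hy hLy => by
      have hP := (hLprop y hy).1
      rw [hLy] at hP
      exact absurd hP (lt_irrefl j))]
    simp
  have hhsum : (∑ l, h l * f l) = 0 := by
    have e1 : (∑ l, h l * f l) = (∑ l, (if l = j then g else 0) * f l)
        + ∑ l, (∑ y ∈ cf.support.filter (fun y => L y = l), cf y) * f l := by
      rw [← Finset.sum_add_distrib]
      exact Finset.sum_congr rfl fun l _ => by rw [hhdef, add_mul]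
    have e2 : (∑ l, (if l = j then g else 0) * f l) = g * f j := by
      rw [Finset.sum_eq_single j (fun b _ hb => by rw [if_neg hb, zero_mul])
        (fun hnot => absurd (Finset.mem_univ j) hnot), if_pos rfl]
    have e3 : (∑ l, (∑ y ∈ cf.support.filter (fun y => L y = l), cf y) * f l)
        = ∑ y ∈ cf.support, cf y * y := by
      calc (∑ l, (∑ y ∈ cf.support.filter (fun y => L y = l), cf y) * f l)
          = ∑ l : Fin n, ∑ y ∈ cf.support.filter (fun y => L y = l), cf y * f (L y) := by
            refine Finset.sum_congr rfl fun l _ => ?_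
            rw [Finset.sum_mul]
            refine Finset.sum_congr rfl fun y hy => ?_
            rw [(Finset.mem_filter.1 hy).2]
        _ = ∑ y ∈ cf.support, cf y * f (L y) :=
            Finset.sum_fiberwise_of_maps_to (fun y _ => Finset.mem_univ (L y)) _
        _ = ∑ y ∈ cf.support, cf y * y := by
            refine Finset.sum_congr rfl fun y hy => ?_
            rw [(hLprop y hy).2]
    have e4 : (∑ y ∈ cf.support, cf y * y) = f j * g := by
      rw [← hsum]
      rfl
    rw [e1, e2, e3, e4]
    rw [mul_comm]
    exact add_self _
  have hhj' : ∀ l, j < l → h l = 0 := by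
    intro l hl
    rw [hhdef]
    simp only []
    rw [if_neg (by intro hlj; rw [hlj] at hl; exact absurd hl (lt_irrefl j)),
      hfiber_empty l (fun hc => absurd (hc.trans hl) (lt_irrefl l))
        (by intro hc; rw [hc] at hl; exact absurd hl (lt_irrefl j))]
    simp
  set B : ℕ := Finset.univ.sup (fun l => weightedTotalDegree w (h l) + weight w (u l)) with hBdef
  have hbound : ∀ l, ∀ μ ∈ (h l).support, weight w μ + weight w (u l) ≤ B := by
    intro l μ hμ
    have h1 : weight w μ ≤ weightedTotalDegree w (h l) := le_weightedTotalDegree w hμ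
    have h2 : weightedTotalDegree w (h l) + weight w (u l) ≤ B := by
      rw [hBdef]
      exact Finset.le_sup (f := fun l => weightedTotalDegree w (h l) + weight w (u l))
        (Finset.mem_univ l)
    omega
  have := key w f u hcoeff hlt hdisj hpos B h hbound hhsum j hhj'
  rwa [hhj] at this

lemma isSMulRegular_quot {A : Type*} [CommRing A] {I : Ideal A} {r : A}
    (H : ∀ g, r * g ∈ I → g ∈ I) :
    IsSMulRegular (A ⧸ (I • ⊤ : Submodule A A)) r := by
  have hI : (I • ⊤ : Submodule A A) = I := by
    rw [smul_eq_mul, Ideal.mul_top]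
  intro a b hab
  obtain ⟨x, rfl⟩ := Submodule.Quotient.mk_surjective _ a
  obtain ⟨y, rfl⟩ := Submodule.Quotient.mk_surjective _ b
  have hx : ((I • ⊤ : Submodule A A).mkQ) (r • x) = ((I • ⊤ : Submodule A A).mkQ) (r • y) := by
    rw [map_smul, map_smul, Submodule.mkQ_apply, Submodule.mkQ_apply]
    exact hab
  rw [Submodule.mkQ_apply, Submodule.mkQ_apply, Submodule.Quotient.eq, hI] at hx
  rw [Submodule.Quotient.eq, hI]
  have hmem : r * (x - y) ∈ I := by
    have he : r • x - r • y = r * (x - y) := by simp [smul_eq_mul, mul_sub]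
    rwa [he] at hx
  exact H _ hmem

lemma ofList_eq_span {A : Type*} [CommRing A] (L : List A) :
    Ideal.ofList L = Ideal.span {x | x ∈ L} := by
  induction L with
  | nil => rw [Ideal.ofList_nil]; simp [Ideal.span_empty]
  | cons a L ih =>
    rw [Ideal.ofList_cons, ih, ← Ideal.span_insert]
    congr 1
    ext x
    simp

lemma take_set {α : Type*} {n : ℕ} (f : Fin n → α) (i : ℕ) (hi : i < n) :
    {x | x ∈ (List.ofFn f).take i} = f '' {l : Fin n | l < (⟨i, hi⟩ : Fin n)} := by
  ext x
  simp only [Set.mem_setOf_eq, List.mem_take_iff_getElem, Set.mem_image]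
  constructor
  · rintro ⟨k, hk, rfl⟩
    have hkn : k < n := by simp at hk; omega
    refine ⟨⟨k, hkn⟩, ?_, ?_⟩
    · simp only [Set.mem_setOf_eq, Fin.mk_lt_mk]
      simp at hk; omega
    · rw [List.getElem_ofFn]
  · rintro ⟨l, hl, rfl⟩
    have hli : (l : ℕ) < i := hl
    refine ⟨l, by simp [List.length_ofFn]; omega, ?_⟩
    rw [List.getElem_ofFn]

lemma main (w : σ → ℕ) {n : ℕ} (f : Fin n → R2) (u : Fin n → (σ →₀ ℕ))
    (hcoeff : ∀ l, MvPolynomial.coeff (u l) (f l) = 1)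
    (hlt : ∀ l, ∀ μ ∈ (f l).support, μ ≠ u l → weight w μ < weight w (u l))
    (hdisj : ∀ l l', l ≠ l' → Disjoint (u l).support (u l').support)
    (hpos : ∀ l, 0 < weight w (u l))
    (hconst : ∀ l, constantCoeff (f l) = 0) :
    RingTheory.Sequence.IsRegular (MvPolynomial σ (ZMod 2)) (List.ofFn f) := by
  refine ⟨⟨?_⟩, ?_⟩
  · intro i hi
    have hin : i < n := by simpa using hi
    have hgetelem : (List.ofFn f)[i]'hi = f ⟨i, hin⟩ := by
      rw [List.getElem_ofFn]
    rw [hgetelem]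
    have hideal : Ideal.ofList ((List.ofFn f).take i)
        = Ideal.span (f '' {l : Fin n | l < (⟨i, hin⟩ : Fin n)}) := by
      rw [ofList_eq_span, take_set f i hin]
    rw [hideal]
    exact isSMulRegular_quot (reg_step w f u hcoeff hlt hdisj hpos ⟨i, hin⟩)
  · intro heq
    have h1top : (1 : R2) ∈ (⊤ : Submodule (MvPolynomial σ (ZMod 2)) (MvPolynomial σ (ZMod 2))) :=
      Submodule.mem_top
    rw [heq, smul_eq_mul, Ideal.mul_top] at h1top
    have hle : Ideal.ofList (List.ofFn f) ≤ RingHom.ker (constantCoeff (R := ZMod 2) (σ := σ)) := by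
      rw [ofList_eq_span, Ideal.span_le]
      intro x hx
      rw [Set.mem_setOf_eq, List.mem_ofFn] at hx
      obtain ⟨l, rfl⟩ := hx
      rw [SetLike.mem_coe, RingHom.mem_ker]
      exact hconst l
    have := hle h1top
    rw [RingHom.mem_ker, map_one] at this
    exact one_ne_zero this


section App

variable (m : ℕ) (hm : 0 < m)

local notation "σm" => (Fin (m+1) ⊕ Fin m)
local notation "Rm" => MvPolynomial (Fin (m+1) ⊕ Fin m) (ZMod 2)

/-- the weight function -/
noncomputable def wt : (Fin (m+1) ⊕ Fin m) → ℕ :=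
  Sum.elim (fun i => if (i : ℕ) = m then vp m + 1 else vp m - vp (i : ℕ))
    (fun i => 2 * 4 ^ (i : ℕ))

/-- generic: sum of distinct variables -/
lemma sumX_coeff {τ : Type*} [DecidableEq τ] {k : ℕ} (g : Fin k → τ)
    (hg : Function.Injective g) (j : Fin k) :
    MvPolynomial.coeff (Finsupp.single (g j) 1) (∑ i, (X (g i) : MvPolynomial τ (ZMod 2))) = 1 := by
  rw [MvPolynomial.coeff_sum]
  rw [Finset.sum_eq_single j]
  · rw [MvPolynomial.coeff_X', if_pos rfl]
  · intro i _ hij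
    rw [MvPolynomial.coeff_X', if_neg]
    intro hcon
    exact hij (hg ((Finsupp.single_left_inj one_ne_zero).1 hcon))
  · intro hnot; exact absurd (Finset.mem_univ j) hnot

lemma sumX_supp {τ : Type*} [DecidableEq τ] {k : ℕ} (g : Fin k → τ) {μ : τ →₀ ℕ}
    (hμ : μ ∈ (∑ i, (X (g i) : MvPolynomial τ (ZMod 2))).support) :
    ∃ i, μ = Finsupp.single (g i) 1 := by
  have := MvPolynomial.mem_support_iff.1 hμ
  rw [MvPolynomial.coeff_sum] at this
  obtain ⟨i, _, hi⟩ := Finset.exists_ne_zero_of_sum_ne_zero this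
  rw [MvPolynomial.coeff_X'] at hi
  by_cases hc : Finsupp.single (g i) 1 = μ
  · exact ⟨i, hc.symm⟩
  · rw [if_neg hc] at hi; exact absurd rfl hi

lemma XY_eq_monomial {τ : Type*} [DecidableEq τ] (a b : τ) (k : ℕ) :
    (X a * X b ^ k : MvPolynomial τ (ZMod 2))
      = monomial (Finsupp.single a 1 + Finsupp.single b k) 1 := by
  rw [MvPolynomial.X_pow_eq_monomial]
  rw [show (X a : MvPolynomial τ (ZMod 2)) = monomial (Finsupp.single a 1) 1 from rfl]
  rw [MvPolynomial.monomial_mul, one_mul]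

/-- the leading exponent of the `s` polynomials -/
noncomputable def kappa (k : ℕ) (i : Fin m) : (Fin (m+1) ⊕ Fin m) →₀ ℕ :=
  Finsupp.single (Sum.inl i.castSucc) 1 + Finsupp.single (Sum.inr i) (2 ^ k)

lemma kappa_inj (k : ℕ) {i i' : Fin m} (h : kappa m k i = kappa m k i') : i = i' := by
  have := DFunLike.congr_fun h (Sum.inr i)
  simp only [kappa, Finsupp.add_apply] at this
  rw [Finsupp.single_eq_of_ne (by simp), Finsupp.single_eq_same, zero_add] at this
  by_cases hii : i' = i
  · exact hii.symm
  · rw [Finsupp.single_eq_of_ne (by simp [hii]), Finsupp.single_eq_of_ne' (by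
      simp [fun hc : i' = i => hii hc])] at this
    · exact absurd this.symm (by positivity)

lemma s_eq_sum_monomial (k : ℕ) :
    (∑ i : Fin m, X (Sum.inl i.castSucc) * X (Sum.inr i) ^ (2 ^ k) : Rm)
      = ∑ i : Fin m, monomial (kappa m k i) 1 :=
  Finset.sum_congr rfl fun i _ => XY_eq_monomial _ _ _

lemma s_coeff (k : ℕ) (j : Fin m) :
    MvPolynomial.coeff (kappa m k j)
      (∑ i : Fin m, X (Sum.inl i.castSucc) * X (Sum.inr i) ^ (2 ^ k) : Rm) = 1 := by
  rw [s_eq_sum_monomial, MvPolynomial.coeff_sum]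
  rw [Finset.sum_eq_single j]
  · rw [MvPolynomial.coeff_monomial, if_pos rfl]
  · intro i _ hij
    rw [MvPolynomial.coeff_monomial, if_neg (fun hc => hij (kappa_inj m k hc))]
  · intro hnot; exact absurd (Finset.mem_univ j) hnot

lemma s_supp (k : ℕ) {μ : (Fin (m+1) ⊕ Fin m) →₀ ℕ}
    (hμ : μ ∈ (∑ i : Fin m, X (Sum.inl i.castSucc) * X (Sum.inr i) ^ (2 ^ k) : Rm).support) :
    ∃ i, μ = kappa m k i := by
  rw [s_eq_sum_monomial] at hμ
  have := MvPolynomial.mem_support_iff.1 hμ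
  rw [MvPolynomial.coeff_sum] at this
  obtain ⟨i, _, hi⟩ := Finset.exists_ne_zero_of_sum_ne_zero this
  rw [MvPolynomial.coeff_monomial] at hi
  by_cases hc : kappa m k i = μ
  · exact ⟨i, hc.symm⟩
  · rw [if_neg hc] at hi; exact absurd rfl hi

lemma wt_inl_lt {i : Fin (m+1)} (h : (i : ℕ) < m) : wt m (Sum.inl i) = vp m - vp (i : ℕ) := by
  simp only [wt, Sum.elim_inl]
  rw [if_neg (by omega)]

lemma wt_inl_last : wt m (Sum.inl (Fin.last m)) = vp m + 1 := by
  simp only [wt, Sum.elim_inl]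
  rw [if_pos (by simp)]

lemma wt_inr (i : Fin m) : wt m (Sum.inr i) = 2 * 4 ^ (i : ℕ) := rfl

lemma weight_kappa (k : ℕ) (i : Fin m) :
    Finsupp.weight (wt m) (kappa m k i)
      = (vp m - vp (i : ℕ)) + 2 ^ k * (2 * 4 ^ (i : ℕ)) := by
  rw [kappa, map_add, weight_single, weight_single, one_mul]
  rw [wt_inl_lt m (by simpa using i.isLt), wt_inr]
  simp

lemma weight_kappa_lt (k : ℕ) (hk : k < m) (i : Fin m) (hne : (i : ℕ) ≠ k) :
    Finsupp.weight (wt m) (kappa m k i)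
      < Finsupp.weight (wt m) (kappa m k (⟨k, hk⟩ : Fin m)) := by
  rw [weight_kappa, weight_kappa]
  exact core_ineq (i.isLt) hk hne

end App

lemma kappa_def (m k : ℕ) (i : Fin m) : kappa m k i =
    Finsupp.single (Sum.inl i.castSucc) 1 + Finsupp.single (Sum.inr i) (2 ^ k) := rfl

end OddCaseAux

open OddCaseAux

/-- the sequence `u₁ = Σ_{i=1}^{m+1} x_i`, `u₂ = Σ_{i=1}^m y_i`,
`s_l = Σ_{i=1}^m x_i y_i^(2^l)` (`l = 0,…,m−2`) is a regular sequence in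
`F₂[x₁,y₁,…,x_m,y_m,x_{m+1}]`. -/
theorem odd_case_sequence_regular (m : ℕ) (hm : 0 < m) :
    RingTheory.Sequence.IsRegular (MvPolynomial (Fin (m + 1) ⊕ Fin m) (ZMod 2))
      ((∑ i : Fin (m + 1), (X (Sum.inl i) : MvPolynomial (Fin (m + 1) ⊕ Fin m) (ZMod 2))) ::
        (∑ i : Fin m, X (Sum.inr i)) ::
        List.ofFn (fun l : Fin (m - 1) =>
          ∑ i : Fin m, X (Sum.inl i.castSucc) * X (Sum.inr i) ^ (2 ^ (l : ℕ)))) := by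
  classical
  set U1 : MvPolynomial (Fin (m + 1) ⊕ Fin m) (ZMod 2) :=
    ∑ i : Fin (m + 1), X (Sum.inl i) with hU1def
  set U2 : MvPolynomial (Fin (m + 1) ⊕ Fin m) (ZMod 2) :=
    ∑ i : Fin m, X (Sum.inr i) with hU2def
  set Sf : Fin (m - 1) → MvPolynomial (Fin (m + 1) ⊕ Fin m) (ZMod 2) :=
    fun l => ∑ i : Fin m, X (Sum.inl i.castSucc) * X (Sum.inr i) ^ (2 ^ (l : ℕ)) with hSfdef
  set F : Fin (m - 1 + 1 + 1) → MvPolynomial (Fin (m + 1) ⊕ Fin m) (ZMod 2) :=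
    Fin.cons U1 (Fin.cons U2 Sf) with hFdef
  set u1 : (Fin (m + 1) ⊕ Fin m) →₀ ℕ := Finsupp.single (Sum.inl (Fin.last m)) 1 with hu1def
  set u2 : (Fin (m + 1) ⊕ Fin m) →₀ ℕ :=
    Finsupp.single (Sum.inr (⟨m - 1, by omega⟩ : Fin m)) 1 with hu2def
  set U : Fin (m - 1 + 1 + 1) → ((Fin (m + 1) ⊕ Fin m) →₀ ℕ) :=
    Fin.cons u1 (Fin.cons u2 (fun l => kappa m (l : ℕ)
      (⟨(l : ℕ), by have := l.isLt; omega⟩ : Fin m))) with hUdef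
  have hlist : (U1 :: U2 :: List.ofFn Sf) = List.ofFn F := by
    rw [hFdef, List.ofFn_succ, List.ofFn_succ]
    simp [Fin.cons_zero, Fin.cons_succ]
  rw [hlist]
  -- support facts
  have hsupp_u1 : u1.support = {Sum.inl (Fin.last m)} :=
    Finsupp.support_single_ne_zero _ one_ne_zero
  have hsupp_u2 : u2.support = {Sum.inr (⟨m - 1, by omega⟩ : Fin m)} :=
    Finsupp.support_single_ne_zero _ one_ne_zero
  have hsupp_kappa : ∀ (k : ℕ) (i : Fin m), (kappa m k i).support ⊆
      {Sum.inl i.castSucc, Sum.inr i} := by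
    intro k i
    rw [kappa_def]
    refine (Finsupp.support_add).trans ?_
    apply Finset.union_subset
    · exact (Finsupp.support_single_subset).trans (by
        intro a ha; simp at ha; simp [ha])
    · exact (Finsupp.support_single_subset).trans (by
        intro a ha; simp at ha; simp [ha])
  apply main (wt m) F U
  · -- hcoeff
    intro l
    refine Fin.cases ?_ (fun l1 => ?_) l
    · simp only [hFdef, hUdef, Fin.cons_zero]
      exact sumX_coeff (fun i : Fin (m + 1) => Sum.inl i)
        (fun a b hab => Sum.inl.inj hab) (Fin.last m)
    · refine Fin.cases ?_ (fun l2 => ?_) l1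
      · simp only [hFdef, hUdef, Fin.cons_succ, Fin.cons_zero]
        exact sumX_coeff (fun i : Fin m => (Sum.inr i : Fin (m+1) ⊕ Fin m))
          (fun a b hab => Sum.inr.inj hab) (⟨m - 1, by omega⟩ : Fin m)
      · simp only [hFdef, hUdef, Fin.cons_succ]
        exact s_coeff m (l2 : ℕ) _
  · -- hlt
    intro l
    refine Fin.cases ?_ (fun l1 => ?_) l
    · simp only [hFdef, hUdef, Fin.cons_zero]
      intro μ hμ hne
      obtain ⟨i, rfl⟩ := sumX_supp (fun i : Fin (m+1) => (Sum.inl i : Fin (m+1) ⊕ Fin m)) hμ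
      rw [hu1def] at hne ⊢
      have hine : i ≠ Fin.last m := by
        intro hc; subst hc; exact hne rfl
      rw [OddCaseAux.weight_single, OddCaseAux.weight_single, one_mul, one_mul, wt_inl_last]
      have him : (i : ℕ) < m := by
        have := i.isLt
        have : (i : ℕ) ≠ m := fun hc => hine (Fin.ext (by simp [hc]))
        omega
      rw [wt_inl_lt m him]
      have := vp_mono (Nat.le_of_lt him)
      omega
    · refine Fin.cases ?_ (fun l2 => ?_) l1
      · simp only [hFdef, hUdef, Fin.cons_succ, Fin.cons_zero]
        intro μ hμ hne
        obtain ⟨i, rfl⟩ := sumX_supp (fun i : Fin m => (Sum.inr i : Fin (m+1) ⊕ Fin m)) hμ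
        rw [hu2def] at hne ⊢
        have hine : (i : ℕ) ≠ m - 1 := by
          intro hc
          exact hne (by congr 1; exact congrArg Sum.inr (Fin.ext (by simp [hc])))
        rw [OddCaseAux.weight_single, OddCaseAux.weight_single, one_mul, one_mul, wt_inr, wt_inr]
        have : (4:ℕ) ^ (i:ℕ) < 4 ^ (m-1) := by
          apply Nat.pow_lt_pow_right (by norm_num)
          have := i.isLt; omega
        simp only []
        omega
      · simp only [hFdef, hUdef, Fin.cons_succ]
        intro μ hμ hne
        obtain ⟨i, rfl⟩ := s_supp m (l2 : ℕ) hμ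
        have hine : (i : ℕ) ≠ (l2 : ℕ) := by
          intro hc
          exact hne (by congr 1; exact Fin.ext hc)
        exact weight_kappa_lt m (l2 : ℕ) (by have := l2.isLt; omega) i hine
  · -- hdisj
    intro l l' hne
    induction l using Fin.cases with
    | zero =>
      induction l' using Fin.cases with
      | zero => exact absurd rfl hne
      | succ b1 =>
        induction b1 using Fin.cases with
        | zero =>
          simp only [hUdef, Fin.cons_zero, Fin.cons_succ]
          rw [hsupp_u1, hsupp_u2]
          simp
        | succ b2 =>
          simp only [hUdef, Fin.cons_zero, Fin.cons_succ]
          refine Disjoint.mono_right (hsupp_kappa _ _) ?_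
          rw [hsupp_u1, Finset.disjoint_singleton_left]
          have hb2 := b2.isLt
          simp [Fin.ext_iff]
          omega
    | succ a1 =>
      induction a1 using Fin.cases with
      | zero =>
        induction l' using Fin.cases with
        | zero =>
          simp only [hUdef, Fin.cons_zero, Fin.cons_succ]
          rw [hsupp_u1, hsupp_u2]
          simp
        | succ b1 =>
          induction b1 using Fin.cases with
          | zero => exact absurd rfl hne
          | succ b2 =>
            simp only [hUdef, Fin.cons_zero, Fin.cons_succ]
            refine Disjoint.mono_right (hsupp_kappa _ _) ?_
            rw [hsupp_u2, Finset.disjoint_singleton_left]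
            have hb2 := b2.isLt
            simp [Fin.ext_iff]
            omega
      | succ a2 =>
        induction l' using Fin.cases with
        | zero =>
          simp only [hUdef, Fin.cons_zero, Fin.cons_succ]
          refine Disjoint.mono_left (hsupp_kappa _ _) ?_
          rw [hsupp_u1, Finset.disjoint_singleton_right]
          have ha2 := a2.isLt
          simp [Fin.ext_iff]
          omega
        | succ b1 =>
          induction b1 using Fin.cases with
          | zero =>
            simp only [hUdef, Fin.cons_zero, Fin.cons_succ]
            refine Disjoint.mono_left (hsupp_kappa _ _) ?_
            rw [hsupp_u2, Finset.disjoint_singleton_right]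
            have ha2 := a2.isLt
            simp [Fin.ext_iff]
            omega
          | succ b2 =>
            simp only [hUdef, Fin.cons_succ]
            have hab : (a2 : ℕ) ≠ (b2 : ℕ) := by
              intro hc
              exact hne (by rw [Fin.ext hc])
            refine Disjoint.mono (hsupp_kappa _ _) (hsupp_kappa _ _) ?_
            refine Finset.disjoint_left.2 ?_
            intro x hx hy
            have ha2 := a2.isLt
            have hb2 := b2.isLt
            simp only [Finset.mem_insert, Finset.mem_singleton] at hx hy
            rcases hx with hx | hx <;> rcases hy with hy | hy <;>
              rw [hx] at hy <;> simp [Fin.ext_iff] at hy <;> omega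
  · -- hpos
    intro l
    refine Fin.cases ?_ (fun l1 => ?_) l
    · simp only [hUdef, Fin.cons_zero, hu1def]
      rw [OddCaseAux.weight_single, one_mul, wt_inl_last]
      omega
    · refine Fin.cases ?_ (fun l2 => ?_) l1
      · simp only [hUdef, Fin.cons_succ, Fin.cons_zero, hu2def]
        rw [OddCaseAux.weight_single, one_mul, wt_inr]
        positivity
      · simp only [hUdef, Fin.cons_succ]
        rw [weight_kappa]
        have : 0 < 2 ^ (l2:ℕ) * (2 * 4 ^ (l2:ℕ)) := by positivity
        simp only [] at this ⊢
        omega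
  · -- hconst
    intro l
    refine Fin.cases ?_ (fun l1 => ?_) l
    · simp only [hFdef, Fin.cons_zero, hU1def]
      rw [map_sum]
      exact Finset.sum_eq_zero fun i _ => by simp
    · refine Fin.cases ?_ (fun l2 => ?_) l1
      · simp only [hFdef, Fin.cons_succ, Fin.cons_zero, hU2def]
        rw [map_sum]
        exact Finset.sum_eq_zero fun i _ => by simp
      · simp only [hFdef, Fin.cons_succ, hSfdef]
        rw [map_sum]
        refine Finset.sum_eq_zero fun i _ => ?_
        simp
end

section
/- In the bigraded polynomial ring F_2[τ, u_2,…,u_{n+1}] (τ of bidegree (1)[0], u_j of bidegree ([j/2])[j]), with motivic Steenrod operations defined by the motivic Wu formula of Proposition 5.5 (Sq^k u_m = Σ_{j=0}^k C(m+j−k−1,j) u_{k−j} u_{m+j} for 0 ≤ k < m, Sq^m u_m = u_m², Sq^k u_m = 0 for k > m, with u_0 = 1, u_1 = 0), the motivic Cartan formula, and Sq^i acting trivially on τ: for any monomial w of bidegree ([m/2])[m], Sq^m w = w² and Sq^j w = 0 for all j > m. -/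
open MvPolynomial Finset

/-- The subtle Stiefel–Whitney class `u_i` in `F₂[τ,u₂,…,u_{n+1}]` (realised as the
polynomial ring on `Option (Fin n)`, with `τ = X none` and `u_{j+2} = X (some j)`),
with the conventions `u₀ = 1`, `u₁ = 0`, `u_i = 0` for `i > n+1`. -/
noncomputable def uv (n : ℕ) (i : ℕ) : MvPolynomial (Option (Fin n)) (ZMod 2) :=
  if i = 0 then 1
  else if h : 2 ≤ i ∧ i ≤ n + 1 then X (some ⟨i - 2, by omega⟩) else 0

/-- Corollary 5.6: in `F₂[τ,u₂,…,u_{n+1}]`, with motivic Steenrod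
operations given by the motivic Wu formula, the motivic Cartan formula and trivial
action on `τ`: for any monomial `w` of bidegree `(⌊m/2⌋)[m]`, `Sq^m w = w²` and
`Sq^j w = 0` for `j > m`. -/
theorem sq_of_monomial_on_diagonal (n : ℕ)
    (Sq : ℕ → MvPolynomial (Option (Fin n)) (ZMod 2) → MvPolynomial (Option (Fin n)) (ZMod 2))
    (hadd : ∀ k x y, Sq k (x + y) = Sq k x + Sq k y)
    (hzeroth : ∀ x, Sq 0 x = x)
    (hCartan : ∀ k x y, Sq k (x * y) = ∑ i ∈ range (k + 1),
      (X none : MvPolynomial (Option (Fin n)) (ZMod 2)) ^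
          (if i % 2 = 1 ∧ (k - i) % 2 = 1 then 1 else 0) * Sq i x * Sq (k - i) y)
    (hτ : ∀ k, 0 < k → Sq k (X none) = 0)
    (hWu : ∀ k m, k < m → Sq k (uv n m) =
      ∑ j ∈ range (k + 1), (Nat.choose (m + j - k - 1) j) • (uv n (k - j) * uv n (m + j)))
    (hdiag : ∀ m, Sq m (uv n m) = (uv n m) ^ 2)
    (htop : ∀ k m, m < k → Sq k (uv n m) = 0)
    (d : Option (Fin n) →₀ ℕ) (m : ℕ)
    (hpd : (d.sum fun o e => (o.elim 0 fun j => (j : ℕ) + 2) * e) = m)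
    (hqd : (d.sum fun o e => (o.elim 1 fun j => ((j : ℕ) + 2) / 2) * e) = m / 2) :
    Sq m (monomial d 1) = (monomial d (1 : ZMod 2)) ^ 2 ∧
      ∀ j, m < j → Sq j (monomial d 1) = 0 := by
  classical
  set T : MvPolynomial (Option (Fin n)) (ZMod 2) := X none with hT
  -- the key predicate: `x` has top operation `Sq a x = τ^ε x²` and vanishing above
  set P : ℕ → ℕ → MvPolynomial (Option (Fin n)) (ZMod 2) → Prop :=
    fun a ε x => Sq a x = T ^ ε * x ^ 2 ∧ ∀ j, a < j → Sq j x = 0 with hP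
  -- the unit satisfies P 0 0
  have huv0 : uv n 0 = 1 := by simp [uv]
  have hone : P 0 0 1 := by
    constructor
    · rw [hzeroth]; ring
    · intro j hj
      have := htop j 0 hj
      rwa [huv0] at this
  -- helper for evaluating sums over `single a b + f`
  have hsum : ∀ (a : Option (Fin n)) (b : ℕ) (f : Option (Fin n) →₀ ℕ)
      (F : Option (Fin n) → ℕ),
      ((Finsupp.single a b + f).sum fun o e => F o * e) =
        F a * b + f.sum fun o e => F o * e := by
    intro a b f F
    rw [Finsupp.sum_add_index' (fun _ => mul_zero _) (fun _ _ _ => mul_add _ _ _),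
        Finsupp.sum_single_index (h := fun o e => F o * e) (mul_zero _)]
  -- multiplicativity
  have hmul : ∀ a b ε δ x y, P a ε x → P b δ y →
      P (a + b) (ε + δ + (if a % 2 = 1 ∧ b % 2 = 1 then 1 else 0)) (x * y) := by
    intro a b ε δ x y hx hy
    constructor
    · rw [hCartan]
      rw [Finset.sum_eq_single a]
      · have hab : a + b - a = b := by omega
        rw [hab, hx.1, hy.1]
        rw [pow_add, pow_add]
        ring
      · intro i hi hne
        rcases lt_or_gt_of_ne hne with h | h
        · have hb : b < a + b - i := by
            have := Finset.mem_range.mp hi; omega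
          rw [hy.2 _ hb]; ring
        · rw [hx.2 i h]; ring
      · intro h
        exact absurd (Finset.mem_range.mpr (by omega)) h
    · intro j hj
      rw [hCartan]
      apply Finset.sum_eq_zero
      intro i hi
      by_cases hia : a < i
      · rw [hx.2 i hia]; ring
      · have hb : b < j - i := by omega
        rw [hy.2 _ hb]; ring
  -- multiplication by τ commutes with Sq
  have htmul : ∀ k x, Sq k (T * x) = T * Sq k x := by
    intro k x
    rw [hCartan]
    rw [Finset.sum_eq_single 0]
    · simp [hzeroth]
    · intro i hi hne
      rw [hτ i (Nat.pos_of_ne_zero hne)]; ring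
    · intro h
      exact absurd (Finset.mem_range.mpr (by omega)) h
  -- multiplying by τ^t lowers ε by t
  have hTpow : ∀ t a x, P a t x → P a 0 (T ^ t * x) := by
    intro t
    induction t with
    | zero => intro a x hx; simpa using hx
    | succ t ih =>
      intro a x hx
      have hx' : P a t (T * x) := by
        constructor
        · rw [htmul, hx.1, pow_succ]; ring
        · intro j hj; rw [htmul, hx.2 j hj, mul_zero]
      have := ih a (T * x) hx'
      rwa [show T ^ t * (T * x) = T ^ (t + 1) * x by rw [pow_succ]; ring] at this
  -- the variables satisfy P
  have hvar : ∀ j : Fin n, P ((j : ℕ) + 2) 0 (X (some j)) := by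
    intro j
    have huj : uv n ((j : ℕ) + 2) = X (some j) := by
      rw [uv, if_neg (by omega), dif_pos ⟨by omega, by have := j.isLt; omega⟩]
      have hfin : (⟨(j : ℕ) + 2 - 2, by omega⟩ : Fin n) = j := by
        ext; simp
      rw [hfin]
    constructor
    · have := hdiag ((j : ℕ) + 2)
      rw [huj] at this
      rw [this]; ring
    · intro k hk
      have := htop k _ hk
      rwa [huj] at this
  -- powers
  have hpow : ∀ a x, P a 0 x → ∀ b, P (a * b) (if a % 2 = 1 then b / 2 else 0) (x ^ b) := by
    intro a x hx b
    induction b with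
    | zero =>
      have : (if a % 2 = 1 then 0 / 2 else 0) = 0 := by split <;> rfl
      rw [this]
      simpa using hone
    | succ b ih =>
      have h1 := hmul (a * b) a _ 0 (x ^ b) x ih hx
      have harith : (if a % 2 = 1 then b / 2 else 0) + 0 +
          (if (a * b) % 2 = 1 ∧ a % 2 = 1 then 1 else 0) =
          (if a % 2 = 1 then (b + 1) / 2 else 0) := by
        have hm := Nat.mul_mod a b 2
        rcases Nat.mod_two_eq_zero_or_one a with ha | ha <;>
          rcases Nat.mod_two_eq_zero_or_one b with hb | hb <;>
            simp [ha, hb, Nat.one_mod] at hm <;> simp [ha, hb, hm] <;> omega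
      rw [harith] at h1
      have hms : a * (b + 1) = a * b + a := by ring
      rw [pow_succ, hms]
      exact h1
  -- arithmetic relation between the two degree sums
  have harith : ∀ g : Option (Fin n) →₀ ℕ, g none = 0 →
      2 * (g.sum fun o e => (o.elim 1 fun j => ((j : ℕ) + 2) / 2) * e) +
        (g.sum fun o e => ((o.elim 0 fun j => (j : ℕ) + 2) % 2) * e) =
        g.sum fun o e => (o.elim 0 fun j => (j : ℕ) + 2) * e := by
    intro g
    induction g using Finsupp.induction with
    | zero => intro _; simp
    | single_add a b f ha hb ih =>
      intro h0
      have hadd' : (Finsupp.single a b + f) none = Finsupp.single a b none + f none :=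
        Finsupp.add_apply _ _ _
      rw [hadd'] at h0
      have hf0 : f none = 0 := by omega
      have hs0 : Finsupp.single a b none = 0 := by omega
      obtain ⟨j, rfl⟩ : ∃ j : Fin n, a = some j := by
        cases a with
        | none => exfalso; rw [Finsupp.single_eq_same] at hs0; exact hb hs0
        | some j => exact ⟨j, rfl⟩
      rw [hsum, hsum, hsum]
      have := ih hf0
      simp only [Option.elim_some, Option.elim_none] at this ⊢
      have hc2 : (2 * (((j : ℕ) + 2) / 2) + ((j : ℕ) + 2) % 2) * b = ((j : ℕ) + 2) * b := by
        congr 1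
        omega
      rw [add_mul, mul_assoc] at hc2
      omega
  -- the main induction over τ-free monomials
  have hmain : ∀ g : Option (Fin n) →₀ ℕ, g none = 0 →
      P (g.sum fun o e => (o.elim 0 fun j => (j : ℕ) + 2) * e)
        ((g.sum fun o e => ((o.elim 0 fun j => (j : ℕ) + 2) % 2) * e) / 2)
        (monomial g 1) := by
    intro g
    induction g using Finsupp.induction with
    | zero =>
      intro _
      simpa [monomial_zero'] using hone
    | single_add a b f ha hb ih =>
      intro h0
      have hadd' : (Finsupp.single a b + f) none = Finsupp.single a b none + f none :=
        Finsupp.add_apply _ _ _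
      rw [hadd'] at h0
      have hf0 : f none = 0 := by omega
      have hs0 : Finsupp.single a b none = 0 := by omega
      obtain ⟨j, rfl⟩ : ∃ j : Fin n, a = some j := by
        cases a with
        | none => exfalso; rw [Finsupp.single_eq_same] at hs0; exact hb hs0
        | some j => exact ⟨j, rfl⟩
      rw [hsum, hsum]
      have hmon : (monomial (Finsupp.single (some j) b + f) (1 : ZMod 2)) =
          (X (some j)) ^ b * monomial f 1 := by
        rw [X_pow_eq_monomial, monomial_mul, one_mul]
      rw [hmon]
      have hxb := hpow _ _ (hvar j) b
      have hfP := ih hf0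
      have h1 := hmul _ _ _ _ _ _ hxb hfP
      -- now fix up the ε arithmetic
      set c : ℕ := (j : ℕ) + 2 with hc
      set qf : ℕ := f.sum fun o e => (o.elim 0 fun j => (j : ℕ) + 2) * e with hqf
      set rf : ℕ := f.sum fun o e => ((o.elim 0 fun j => (j : ℕ) + 2) % 2) * e with hrf
      have hpar : qf % 2 = rf % 2 := by
        have := harith f hf0
        omega
      have heps : (if c % 2 = 1 then b / 2 else 0) + rf / 2 +
          (if (c * b) % 2 = 1 ∧ qf % 2 = 1 then 1 else 0) =
          ((c % 2) * b + rf) / 2 := by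
        have hm := Nat.mul_mod c b 2
        rcases Nat.mod_two_eq_zero_or_one c with hcc | hcc <;>
          rcases Nat.mod_two_eq_zero_or_one b with hbb | hbb <;>
            rcases Nat.mod_two_eq_zero_or_one qf with hqq | hqq <;>
            simp [hcc, hbb, Nat.one_mod] at hm <;> simp [hcc, hbb, hqq, hm] <;> omega
      simp only [Option.elim_some, Option.elim_none] at h1 ⊢
      rwa [heps] at h1
  -- assemble
  have hdec : d = Finsupp.single none (d none) + d.erase none :=
    (Finsupp.single_add_erase none d).symm
  set t : ℕ := d none with ht
  set g : Option (Fin n) →₀ ℕ := d.erase none with hg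
  have hg0 : g none = 0 := Finsupp.erase_same
  rw [hdec] at hpd hqd
  rw [hsum] at hpd
  rw [hsum] at hqd
  simp only [Option.elim_some, Option.elim_none] at hpd hqd
  have hqg : (g.sum fun o e => (o.elim 0 fun j => (j : ℕ) + 2) * e) = m := by omega
  have hP1 := hmain g hg0
  rw [hqg] at hP1
  have htr : t = (g.sum fun o e => ((o.elim 0 fun j => (j : ℕ) + 2) % 2) * e) / 2 := by
    have h1 := harith g hg0
    rw [hqg] at h1
    omega
  rw [← htr] at hP1
  have hfin := hTpow t m _ hP1
  have hmon2 : T ^ t * monomial g (1 : ZMod 2) = monomial d 1 := by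
    rw [hT, X_pow_eq_monomial, monomial_mul, one_mul, ← hdec]
  rw [hmon2] at hfin
  exact ⟨by rw [hfin.1]; ring, hfin.2⟩
end

section
/- Define elements θ_j(q) in F_2[u_2, u_3, …] (truncated polynomial algebra on subtle Stiefel–Whitney classes, with u_1 = 0) by the Wu/Cartan formalism starting from θ_0 = u_2, θ_{j+1} = Sq^{2^j} θ_j. Assume u_2(q) = 0 and all 'Chern classes' c_i(q) = τ^{i mod 2} u_i(q)² vanish. Then for all j ≥ 0 with 2^j + 1 ≤ n, one has θ_{j+1}(q) = Σ_{h=0}^{2^j} u_{2^j − h}(q) u_{2^j + 1 + h}(q), and consequently Σ_{h=0}^{2^j} u_{2^j−h}(q) u_{2^j+1+h}(q) = 0, i.e., u_{2^j+1}(q) = Σ_{h=0}^{2^{j−1}−1} u_{2^{j−1}−h}(q) u_{2^{j−1}+1+h}(q). -/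
open Finset

/-- Proposition 10.1: in a commutative `F₂`-algebra (the motivic
cohomology of the Čech simplicial scheme of a quadratic form `q ∈ I³` of dimension `n`)
with classes `u_i = u_i(q)`, `u₀ = 1`, `u₁ = 0`, `u_i = 0` for `i > n`, an element `τ`,
and Steenrod operations satisfying the motivic Wu and Cartan formulas and acting
trivially on `τ`; if `u₂ = 0` and all Chern classes `c_i = τ^(i mod 2) u_i²` vanish,
then `θ_{j+1} = Σ_{h=0}^{2^j} u_{2^j−h} u_{2^j+1+h}` and this sum vanishes. -/
theorem subtle_class_relations (A : Type*) [CommRing A] (n : ℕ)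
    (τ : A) (u : ℕ → A)
    (hu0 : u 0 = 1) (hu1 : u 1 = 0) (hutop : ∀ i, n < i → u i = 0)
    (Sq : ℕ → A → A)
    (hadd : ∀ k x y, Sq k (x + y) = Sq k x + Sq k y)
    (hzeroth : ∀ x, Sq 0 x = x)
    (hCartan : ∀ k x y, Sq k (x * y) = ∑ i ∈ range (k + 1),
      τ ^ (if i % 2 = 1 ∧ (k - i) % 2 = 1 then 1 else 0) * Sq i x * Sq (k - i) y)
    (hτ : ∀ k, 0 < k → Sq k τ = 0)
    (hWu : ∀ k m, k < m → Sq k (u m) =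
      ∑ j ∈ range (k + 1), (Nat.choose (m + j - k - 1) j) • (u (k - j) * u (m + j)))
    (hdiag : ∀ m, Sq m (u m) = (u m) ^ 2)
    (htop : ∀ k m, m < k → Sq k (u m) = 0)
    (hu2 : u 2 = 0)
    (hchern : ∀ i, 2 ≤ i → τ ^ (i % 2) * (u i) ^ 2 = 0)
    (θ : ℕ → A) (hθ0 : θ 0 = u 2) (hθs : ∀ j, θ (j + 1) = Sq (2 ^ j) (θ j)) :
    ∀ j, 2 ^ j + 1 ≤ n →
      θ (j + 1) = (∑ h ∈ range (2 ^ j + 1), u (2 ^ j - h) * u (2 ^ j + 1 + h)) ∧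
      (∑ h ∈ range (2 ^ j + 1), u (2 ^ j - h) * u (2 ^ j + 1 + h)) = 0 := by
  -- Sq kills 0
  have hSq0 : ∀ k, Sq k (0 : A) = 0 := by
    intro k
    have h := hadd k 0 0
    rw [add_zero] at h
    exact (left_eq_add.mp h)
  -- Sq over finite sums
  have hSqSum : ∀ (k : ℕ) (s : Finset ℕ) (f : ℕ → A),
      Sq k (∑ i ∈ s, f i) = ∑ i ∈ s, Sq k (f i) := by
    intro k s f
    induction s using Finset.induction_on with
    | empty => simp [hSq0]
    | insert _ _ hnotmem ih => rw [Finset.sum_insert hnotmem, hadd, ih, Finset.sum_insert hnotmem]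
  -- all θ vanish
  have hθzero : ∀ j, θ j = 0 := by
    intro j
    induction j with
    | zero => rw [hθ0, hu2]
    | succ j ih => rw [hθs, ih, hSq0]
  -- key computation
  have key : ∀ N : ℕ, 1 ≤ N →
      Sq (2 * N) (∑ h ∈ range (N + 1), u (N - h) * u (N + 1 + h))
        = ∑ h ∈ range (2 * N + 1), u (2 * N - h) * u (2 * N + 1 + h) := by
    intro N hN
    rw [hSqSum, Finset.sum_range_succ]
    have hrest : ∀ h ∈ range N, Sq (2 * N) (u (N - h) * u (N + 1 + h)) = 0 := by
      intro h hh
      simp only [Finset.mem_range] at hh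
      set a := N - h with ha
      set b := N + 1 + h with hb
      have ha1 : 1 ≤ a := by omega
      have hb2 : 2 ≤ b := by omega
      have hab : a + b = 2 * N + 1 := by omega
      rw [hCartan]
      apply Finset.sum_eq_zero
      intro i hi
      simp only [Finset.mem_range] at hi
      by_cases h1 : a < i
      · rw [htop i a h1]; ring
      · by_cases h2 : i = a
        · subst h2
          rw [hdiag]
          have he : (if a % 2 = 1 ∧ (2 * N - a) % 2 = 1 then 1 else 0) = a % 2 := by
            split_ifs <;> omega
          rw [he]
          by_cases h2a : 2 ≤ a
          · rw [hchern a h2a, zero_mul]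
          · have hi1 : a = 1 := by omega
            rw [hi1, hu1]
            ring
        · by_cases h3 : i = a - 1
          · subst h3
            have h2Ni : 2 * N - (a - 1) = b := by omega
            rw [h2Ni, hdiag]
            have he : (if (a - 1) % 2 = 1 ∧ b % 2 = 1 then 1 else 0) = b % 2 := by
              split_ifs <;> omega
            rw [he]
            have hz := hchern b hb2
            calc τ ^ (b % 2) * Sq (a - 1) (u a) * u b ^ 2
                = Sq (a - 1) (u a) * (τ ^ (b % 2) * u b ^ 2) := by ring
              _ = 0 := by rw [hz, mul_zero]
          · have hlt : i < a - 1 := by omega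
            rw [htop (2 * N - i) b (by omega)]
            ring
    rw [Finset.sum_eq_zero hrest, zero_add]
    have hNN : N - N = 0 := Nat.sub_self N
    rw [hNN, hu0, one_mul]
    have hb : N + 1 + N = 2 * N + 1 := by ring
    rw [hb, hWu (2 * N) (2 * N + 1) (by omega)]
    apply Finset.sum_congr rfl
    intro i hi
    have hc : 2 * N + 1 + i - 2 * N - 1 = i := by omega
    rw [hc, Nat.choose_self, one_smul]
  -- θ (j+1) equals the sum
  have hT : ∀ j, θ (j + 1) = ∑ h ∈ range (2 ^ j + 1), u (2 ^ j - h) * u (2 ^ j + 1 + h) := by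
    intro j
    induction j with
    | zero =>
      rw [hθs, hθ0]
      norm_num
      rw [hWu 1 2 (by norm_num)]
      apply Finset.sum_congr rfl
      intro i hi
      have hc : 2 + i - 1 - 1 = i := by omega
      rw [hc, Nat.choose_self, one_smul]
    | succ j ih =>
      rw [hθs, ih]
      have h2 : (2 : ℕ) ^ (j + 1) = 2 * 2 ^ j := by ring
      rw [h2]
      exact key (2 ^ j) Nat.one_le_two_pow
  intro j _
  exact ⟨hT j, by rw [← hT j]; exact hθzero (j + 1)⟩
end

section
/- With t, h, θ_j, ρ_j as defined (t(u_i) = w_i, t(τ) = 1, t kills positive Milnor K-theory; h multiplies the u-monomial corresponding to a w-monomial by the appropriate power of τ to land in bidegree ([p/2])[p]; θ_0 = u_2, θ_{j+1} = Sq^{2^j}θ_j motivically; ρ_0 = w_2, ρ_{j+1} = Sq^{2^j}ρ_j topologically): for every j, t(θ_j) = ρ_j and h(ρ_j) = θ_j. -/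
open MvPolynomial Finset

/-- `w_i ∈ F₂[w₂,…,w_n]` (variables indexed by `Fin (n−1)`, variable `j` is `w_{j+2}`),
with `w₀ = 1`, `w₁ = 0`, `w_i = 0` for `i > n`. -/
noncomputable def wv (n : ℕ) (i : ℕ) : MvPolynomial (Fin (n - 1)) (ZMod 2) :=
  if i = 0 then 1
  else if h : 2 ≤ i ∧ i ≤ n then X ⟨i - 2, by omega⟩ else 0

/-- `u_i ∈ F₂[τ,u₂,…,u_n]` (variables indexed by `Option (Fin (n−1))`, `τ = X none`,
`u_{j+2} = X (some j)`), with `u₀ = 1`, `u₁ = 0`, `u_i = 0` for `i > n`. -/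
noncomputable def uvn (n : ℕ) (i : ℕ) : MvPolynomial (Option (Fin (n - 1))) (ZMod 2) :=
  if i = 0 then 1
  else if h : 2 ≤ i ∧ i ≤ n then X (some ⟨i - 2, by omega⟩) else 0

/-- Topological degree of a `u`-monomial. -/
def pDeg {n : ℕ} (d : Fin n →₀ ℕ) : ℕ := d.sum fun j e => ((j : ℕ) + 2) * e

/-- Weight degree of a `u`-monomial. -/
def qDeg {n : ℕ} (d : Fin n →₀ ℕ) : ℕ := d.sum fun j e => (((j : ℕ) + 2) / 2) * e

/-- The additive map `h : F₂[w₂,…,w_n] → F₂[τ,u₂,…,u_n]`,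
`x ↦ τ^(⌊p/2⌋−q)·i(x)` on monomials. -/
noncomputable def hMap {n : ℕ} (x : MvPolynomial (Fin n) (ZMod 2)) :
    MvPolynomial (Option (Fin n)) (ZMod 2) :=
  ∑ d ∈ x.support,
    X none ^ (pDeg d / 2 - qDeg d) * monomial (d.mapDomain Option.some) 1

/-- The ring homomorphism `t : F₂[τ,u₂,…,u_n] → F₂[w₂,…,w_n]`, `τ ↦ 1`, `u_j ↦ w_j`
(killing the positive part of Milnor K-theory, which is absent here). -/
noncomputable def tMap {n : ℕ} :
    MvPolynomial (Option (Fin n)) (ZMod 2) →ₐ[ZMod 2] MvPolynomial (Fin n) (ZMod 2) :=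
  aeval fun o => o.elim 1 X


def wP (m : ℕ) : Option (Fin m) → ℕ := fun o => o.elim 0 (fun i => (i : ℕ) + 2)
def wQ (m : ℕ) : Option (Fin m) → ℕ := fun o => o.elim 1 (fun i => ((i : ℕ) + 2) / 2)

theorem zmod2_coeff_one {σ : Type*} {x : MvPolynomial σ (ZMod 2)} {e : σ →₀ ℕ}
    (h : coeff e x ≠ 0) : coeff e x = 1 := by
  have : ∀ a : ZMod 2, a ≠ 0 → a = 1 := by decide
  exact this _ h

theorem uvn_homog_P (n m : ℕ) : (uvn n m).IsWeightedHomogeneous (wP (n-1)) m := by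
  unfold uvn
  split_ifs with h1 h2
  · subst h1; exact isWeightedHomogeneous_one _ _
  · have := isWeightedHomogeneous_X (ZMod 2) (wP (n-1)) (some (⟨m - 2, by omega⟩ : Fin (n-1)))
    convert this using 1
    simp [wP]; omega
  · exact isWeightedHomogeneous_zero _ _ _

theorem uvn_homog_Q (n m : ℕ) : (uvn n m).IsWeightedHomogeneous (wQ (n-1)) (m / 2) := by
  unfold uvn
  split_ifs with h1 h2
  · subst h1; exact isWeightedHomogeneous_one _ _
  · have := isWeightedHomogeneous_X (ZMod 2) (wQ (n-1)) (some (⟨m - 2, by omega⟩ : Fin (n-1)))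
    convert this using 1
    simp [wQ]
    omega
  · exact isWeightedHomogeneous_zero _ _ _

theorem homog_nsmul {σ : Type*} {w : σ → ℕ} {x : MvPolynomial σ (ZMod 2)} {d : ℕ} (c : ℕ)
    (h : x.IsWeightedHomogeneous w d) : (c • x).IsWeightedHomogeneous w d := by
  intro e he
  exact h fun h0 => he (by rw [coeff_smul, h0, smul_zero])

theorem nsmul_eq_zero_of_even {σ : Type*} {x : MvPolynomial σ (ZMod 2)} {c : ℕ}
    (hc : c % 2 = 0) : c • x = 0 := by
  have : c • x = ((c : ZMod 2)) • x := (Nat.cast_smul_eq_nsmul (ZMod 2) c x).symm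
  rw [this, (ZMod.natCast_eq_zero_iff c 2).mpr (by omega), zero_smul]

theorem choose_even_of_even_odd {N j : ℕ} (hN : N % 2 = 0) (hj : j % 2 = 1) :
    Nat.choose N j % 2 = 0 := by
  rcases N with _ | n
  · rw [Nat.choose_eq_zero_of_lt (by omega)]
  · have h := Nat.add_one_mul_choose_eq n (j - 1)
    have hj1 : j - 1 + 1 = j := by omega
    rw [hj1] at h
    have h2 : ((n + 1) * Nat.choose n (j - 1)) % 2 = 0 := by
      rw [Nat.mul_mod, hN, zero_mul, Nat.zero_mod]
    rw [h, Nat.mul_mod, hj, mul_one, Nat.mod_mod_of_dvd _ (dvd_refl 2)] at h2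
    exact h2

section homog
variable (n : ℕ)
  (SqM : ℕ → MvPolynomial (Option (Fin (n - 1))) (ZMod 2) →
      MvPolynomial (Option (Fin (n - 1))) (ZMod 2))

theorem SqM_uvn_homog
    (hMWu : ∀ k m, k < m → SqM k (uvn n m) =
      ∑ j ∈ range (k + 1), (Nat.choose (m + j - k - 1) j) • (uvn n (k - j) * uvn n (m + j)))
    (hMdiag : ∀ m, SqM m (uvn n m) = (uvn n m) ^ 2)
    (hMtop : ∀ k m, m < k → SqM k (uvn n m) = 0) :
    ∀ k m, (SqM k (uvn n m)).IsWeightedHomogeneous (wP (n-1)) (m + k) ∧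
      (SqM k (uvn n m)).IsWeightedHomogeneous (wQ (n-1)) (m / 2 + k / 2) := by
  intro k m
  rcases lt_trichotomy k m with h | h | h
  · rw [hMWu k m h]
    constructor
    · apply IsWeightedHomogeneous.sum
      intro j hj
      rw [mem_range] at hj
      apply homog_nsmul
      have := (uvn_homog_P n (k - j)).mul (uvn_homog_P n (m + j))
      have he : (k - j) + (m + j) = m + k := by omega
      rwa [he] at this
    · apply IsWeightedHomogeneous.sum
      intro j hj
      rw [mem_range] at hj
      by_cases hpar : j % 2 = 1 ∧ m % 2 = k % 2
      · rw [nsmul_eq_zero_of_even (choose_even_of_even_odd (by omega) hpar.1)]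
        exact isWeightedHomogeneous_zero _ _ _
      · apply homog_nsmul
        have := (uvn_homog_Q n (k - j)).mul (uvn_homog_Q n (m + j))
        have he : (k - j) / 2 + (m + j) / 2 = m / 2 + k / 2 := by omega
        rwa [he] at this
  · subst h
    rw [hMdiag, sq]
    constructor
    · exact (uvn_homog_P n k).mul (uvn_homog_P n k)
    · exact (uvn_homog_Q n k).mul (uvn_homog_Q n k)
  · rw [hMtop k m h]
    exact ⟨isWeightedHomogeneous_zero _ _ _, isWeightedHomogeneous_zero _ _ _⟩
end homog


theorem tMap_uvn (n m : ℕ) : tMap (uvn n m) = wv n m := by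
  unfold uvn wv; split_ifs with h1 h2 <;> simp [tMap]

theorem uvn_X (n : ℕ) (a : Fin (n - 1)) : X (some a) = uvn n ((a : ℕ) + 2) := by
  have ha := a.isLt
  unfold uvn
  rw [if_neg (by omega), dif_pos ⟨by omega, by omega⟩]
  congr

theorem wv_one (n : ℕ) : wv n 0 = 1 := by simp [wv]
theorem uvn_one (n : ℕ) : uvn n 0 = 1 := by simp [uvn]

section main
variable (n : ℕ)
  (SqM : ℕ → MvPolynomial (Option (Fin (n - 1))) (ZMod 2) →
      MvPolynomial (Option (Fin (n - 1))) (ZMod 2))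
  (SqT : ℕ → MvPolynomial (Fin (n - 1)) (ZMod 2) → MvPolynomial (Fin (n - 1)) (ZMod 2))

theorem SqM_zero (hMadd : ∀ k x y, SqM k (x + y) = SqM k x + SqM k y) (k : ℕ) :
    SqM k 0 = 0 := by
  have := hMadd k 0 0
  rw [add_zero] at this
  exact (left_eq_add.mp this)

theorem SqT_zero (hTadd : ∀ k x y, SqT k (x + y) = SqT k x + SqT k y) (k : ℕ) :
    SqT k 0 = 0 := by
  have := hTadd k 0 0
  rw [add_zero] at this
  exact (left_eq_add.mp this)

theorem tMap_SqM_uvn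
    (hMWu : ∀ k m, k < m → SqM k (uvn n m) =
      ∑ j ∈ range (k + 1), (Nat.choose (m + j - k - 1) j) • (uvn n (k - j) * uvn n (m + j)))
    (hMdiag : ∀ m, SqM m (uvn n m) = (uvn n m) ^ 2)
    (hMtop : ∀ k m, m < k → SqM k (uvn n m) = 0)
    (hTWu : ∀ k m, k < m → SqT k (wv n m) =
      ∑ j ∈ range (k + 1), (Nat.choose (m + j - k - 1) j) • (wv n (k - j) * wv n (m + j)))
    (hTdiag : ∀ m, SqT m (wv n m) = (wv n m) ^ 2)
    (hTtop : ∀ k m, m < k → SqT k (wv n m) = 0) :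
    ∀ k m, tMap (SqM k (uvn n m)) = SqT k (wv n m) := by
  intro k m
  rcases lt_trichotomy k m with h | h | h
  · rw [hMWu k m h, hTWu k m h, map_sum]
    refine Finset.sum_congr rfl fun j _ => ?_
    rw [map_nsmul, map_mul, tMap_uvn, tMap_uvn]
  · subst h; rw [hMdiag, hTdiag, map_pow, tMap_uvn]
  · rw [hMtop k m h, hTtop k m h, map_zero]

theorem tMap_SqM
    (hMadd : ∀ k x y, SqM k (x + y) = SqM k x + SqM k y)
    (hMzeroth : ∀ x, SqM 0 x = x)
    (hMCartan : ∀ k x y, SqM k (x * y) = ∑ i ∈ range (k + 1),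
      (X none : MvPolynomial (Option (Fin (n - 1))) (ZMod 2)) ^
          (if i % 2 = 1 ∧ (k - i) % 2 = 1 then 1 else 0) * SqM i x * SqM (k - i) y)
    (hMτ : ∀ k, 0 < k → SqM k (X none) = 0)
    (hMWu : ∀ k m, k < m → SqM k (uvn n m) =
      ∑ j ∈ range (k + 1), (Nat.choose (m + j - k - 1) j) • (uvn n (k - j) * uvn n (m + j)))
    (hMdiag : ∀ m, SqM m (uvn n m) = (uvn n m) ^ 2)
    (hMtop : ∀ k m, m < k → SqM k (uvn n m) = 0)
    (hTadd : ∀ k x y, SqT k (x + y) = SqT k x + SqT k y)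
    (hTzeroth : ∀ x, SqT 0 x = x)
    (hTCartan : ∀ k x y, SqT k (x * y) = ∑ i ∈ range (k + 1), SqT i x * SqT (k - i) y)
    (hTWu : ∀ k m, k < m → SqT k (wv n m) =
      ∑ j ∈ range (k + 1), (Nat.choose (m + j - k - 1) j) • (wv n (k - j) * wv n (m + j)))
    (hTdiag : ∀ m, SqT m (wv n m) = (wv n m) ^ 2)
    (hTtop : ∀ k m, m < k → SqT k (wv n m) = 0) :
    ∀ (x : MvPolynomial (Option (Fin (n - 1))) (ZMod 2)) (k : ℕ),
      tMap (SqM k x) = SqT k (tMap x) := by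
  -- first: on variables
  have hvar : ∀ (i : Option (Fin (n - 1))) (k : ℕ),
      tMap (SqM k (X i)) = SqT k (tMap (X i)) := by
    intro i k
    have hXi : tMap (X i : MvPolynomial (Option (Fin (n-1))) (ZMod 2)) = i.elim 1 X := by
      simp [tMap]
    cases i with
    | none =>
      rcases Nat.eq_zero_or_pos k with hk | hk
      · subst hk; rw [hMzeroth, hTzeroth]
      · rw [hMτ k hk, map_zero, hXi]
        show (0 : MvPolynomial (Fin (n-1)) (ZMod 2)) = SqT k 1
        rw [← wv_one n, hTtop k 0 hk]
    | some a =>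
      rw [uvn_X n a, tMap_SqM_uvn n SqM SqT hMWu hMdiag hMtop hTWu hTdiag hTtop, tMap_uvn]
  intro x
  induction x using MvPolynomial.induction_on with
  | C a =>
    intro k
    have ha : a = 0 ∨ a = 1 := by revert a; decide
    rcases ha with ha | ha <;> subst ha
    · have hC : (C (0 : ZMod 2) : MvPolynomial (Option (Fin (n-1))) (ZMod 2)) = 0 := map_zero C
      rw [hC, SqM_zero n SqM hMadd, map_zero]
      exact (SqT_zero n SqT hTadd k).symm
    · have hC : (C (1 : ZMod 2) : MvPolynomial (Option (Fin (n-1))) (ZMod 2)) = 1 := map_one C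
      rw [hC, map_one]
      rcases Nat.eq_zero_or_pos k with hk | hk
      · subst hk; rw [hMzeroth, hTzeroth, map_one]
      · have h1 : SqM k 1 = 0 := by rw [← uvn_one n]; exact hMtop k 0 hk
        have h2 : SqT k 1 = 0 := by rw [← wv_one n]; exact hTtop k 0 hk
        rw [h1, h2, map_zero]
  | add p q hp hq =>
    intro k
    rw [hMadd, map_add, hp, hq, map_add, hTadd]
  | mul_X p i hp =>
    intro k
    rw [hMCartan, map_sum, map_mul, hTCartan]
    refine Finset.sum_congr rfl fun j _ => ?_
    rw [map_mul, map_mul, map_pow, hp, hvar]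
    have : tMap (X none : MvPolynomial (Option (Fin (n-1))) (ZMod 2)) = 1 := by simp [tMap]
    rw [this, one_pow, one_mul]
end main


-- helper for the tau power factor in Cartan
theorem tau_pow_homog {n : ℕ} (e : ℕ) (he : e ≤ 1) :
    ((X none : MvPolynomial (Option (Fin (n-1))) (ZMod 2)) ^ e).IsWeightedHomogeneous
      (wP (n-1)) 0 ∧
    ((X none : MvPolynomial (Option (Fin (n-1))) (ZMod 2)) ^ e).IsWeightedHomogeneous
      (wQ (n-1)) e := by
  interval_cases e
  · rw [pow_zero]; exact ⟨isWeightedHomogeneous_one _ _, isWeightedHomogeneous_one _ _⟩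
  · rw [pow_one]
    exact ⟨isWeightedHomogeneous_X _ _ _, isWeightedHomogeneous_X _ _ _⟩


section homog
variable {n : ℕ}
  {SqM : ℕ → MvPolynomial (Option (Fin (n - 1))) (ZMod 2) →
      MvPolynomial (Option (Fin (n - 1))) (ZMod 2)}
  (hMadd : ∀ k x y, SqM k (x + y) = SqM k x + SqM k y)
  (hMzeroth : ∀ x, SqM 0 x = x)
  (hMCartan : ∀ k x y, SqM k (x * y) = ∑ i ∈ range (k + 1),
      (X none : MvPolynomial (Option (Fin (n - 1))) (ZMod 2)) ^
          (if i % 2 = 1 ∧ (k - i) % 2 = 1 then 1 else 0) * SqM i x * SqM (k - i) y)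
  (hMτ : ∀ k, 0 < k → SqM k (X none) = 0)
  (hMuvnP : ∀ k m, (SqM k (uvn n m)).IsWeightedHomogeneous (wP (n-1)) (m + k))
  (hMuvnQ : ∀ k m, (SqM k (uvn n m)).IsWeightedHomogeneous (wQ (n-1)) (m / 2 + k / 2))
  (hMone : ∀ k, 0 < k → SqM k 1 = 0)

include hMadd hMzeroth hMCartan hMτ hMuvnP hMuvnQ hMone

-- L1
theorem SqM_X_homog :
    ∀ (i : Option (Fin (n-1))) (j : ℕ),
      (SqM j (X i)).IsWeightedHomogeneous (wP (n-1)) (wP (n-1) i + j) ∧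
      (SqM j (X i)).IsWeightedHomogeneous (wQ (n-1)) (wQ (n-1) i + j / 2) := by
  intro i j
  cases i with
  | none =>
    rcases Nat.eq_zero_or_pos j with hj | hj
    · subst hj
      rw [hMzeroth]
      exact ⟨isWeightedHomogeneous_X _ _ _, isWeightedHomogeneous_X _ _ _⟩
    · rw [hMτ j hj]
      exact ⟨isWeightedHomogeneous_zero _ _ _, isWeightedHomogeneous_zero _ _ _⟩
  | some a =>
    rw [uvn_X n a]
    constructor
    · have := hMuvnP j ((a : ℕ) + 2)
      have he : (a : ℕ) + 2 + j = wP (n-1) (some a) + j := rfl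
      rwa [he] at this
    · have := hMuvnQ j ((a : ℕ) + 2)
      have he : ((a : ℕ) + 2) / 2 + j / 2 = wQ (n-1) (some a) + j / 2 := rfl
      rwa [he] at this

-- L2
theorem SqM_X_pow_homog :
    ∀ (b : ℕ) (i : Option (Fin (n-1))) (k : ℕ),
      (SqM k (X i ^ b)).IsWeightedHomogeneous (wP (n-1)) (b * wP (n-1) i + k) ∧
      (SqM k (X i ^ b)).IsWeightedHomogeneous (wQ (n-1)) (b * wQ (n-1) i + k / 2) := by
  intro b
  induction b with
  | zero =>
    intro i k
    rw [pow_zero]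
    rcases Nat.eq_zero_or_pos k with hk | hk
    · subst hk
      rw [hMzeroth]
      constructor
      · simpa using isWeightedHomogeneous_one (ZMod 2) (wP (n-1))
      · simpa using isWeightedHomogeneous_one (ZMod 2) (wQ (n-1))
    · rw [hMone k hk]
      exact ⟨isWeightedHomogeneous_zero _ _ _, isWeightedHomogeneous_zero _ _ _⟩
  | succ b ih =>
    intro i k
    rw [pow_succ, hMCartan]
    have hX := SqM_X_homog hMadd hMzeroth hMCartan hMτ hMuvnP hMuvnQ hMone
    constructor
    · apply IsWeightedHomogeneous.sum
      intro j hj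
      rw [mem_range] at hj
      have h1 := ((tau_pow_homog (n := n) (if j % 2 = 1 ∧ (k - j) % 2 = 1 then 1 else 0) (by split_ifs <;> omega)).1.mul
        (ih i j).1).mul (hX i (k - j)).1
      have he : 0 + (b * wP (n-1) i + j) + (wP (n-1) i + (k - j)) =
          (b + 1) * wP (n-1) i + k := by
        rw [add_one_mul]
        omega
      rwa [he] at h1
    · apply IsWeightedHomogeneous.sum
      intro j hj
      rw [mem_range] at hj
      have h1 := ((tau_pow_homog (n := n) (if j % 2 = 1 ∧ (k - j) % 2 = 1 then 1 else 0) (by split_ifs <;> omega)).2.mul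
        (ih i j).2).mul (hX i (k - j)).2
      have he : (if j % 2 = 1 ∧ (k - j) % 2 = 1 then 1 else 0) + (b * wQ (n-1) i + j / 2)
          + (wQ (n-1) i + (k - j) / 2) = (b + 1) * wQ (n-1) i + k / 2 := by
        rw [add_one_mul]
        split_ifs <;> omega
      rwa [he] at h1
end homog

section homog2
variable {n : ℕ}
  {SqM : ℕ → MvPolynomial (Option (Fin (n - 1))) (ZMod 2) →
      MvPolynomial (Option (Fin (n - 1))) (ZMod 2)}
  (hMadd : ∀ k x y, SqM k (x + y) = SqM k x + SqM k y)
  (hMzeroth : ∀ x, SqM 0 x = x)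
  (hMCartan : ∀ k x y, SqM k (x * y) = ∑ i ∈ range (k + 1),
      (X none : MvPolynomial (Option (Fin (n - 1))) (ZMod 2)) ^
          (if i % 2 = 1 ∧ (k - i) % 2 = 1 then 1 else 0) * SqM i x * SqM (k - i) y)
  (hMτ : ∀ k, 0 < k → SqM k (X none) = 0)
  (hMuvnP : ∀ k m, (SqM k (uvn n m)).IsWeightedHomogeneous (wP (n-1)) (m + k))
  (hMuvnQ : ∀ k m, (SqM k (uvn n m)).IsWeightedHomogeneous (wQ (n-1)) (m / 2 + k / 2))
  (hMone : ∀ k, 0 < k → SqM k 1 = 0)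

include hMadd hMzeroth hMCartan hMτ hMuvnP hMuvnQ hMone

theorem SqM_monomial_homog :
    ∀ (d : Option (Fin (n-1)) →₀ ℕ) (k : ℕ),
      (SqM k (monomial d 1)).IsWeightedHomogeneous (wP (n-1))
        (Finsupp.weight (wP (n-1)) d + k) ∧
      (SqM k (monomial d 1)).IsWeightedHomogeneous (wQ (n-1))
        (Finsupp.weight (wQ (n-1)) d + k / 2) := by
  intro d
  induction d using Finsupp.induction with
  | zero =>
    intro k
    have h1 : (monomial (0 : Option (Fin (n-1)) →₀ ℕ) (1 : ZMod 2)) = 1 := by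
      simp [monomial_zero']
    rw [h1, map_zero]
    rcases Nat.eq_zero_or_pos k with hk | hk
    · subst hk
      rw [hMzeroth]
      constructor
      · simpa using isWeightedHomogeneous_one (ZMod 2) (wP (n-1))
      · simpa using isWeightedHomogeneous_one (ZMod 2) (wQ (n-1))
    · rw [hMone k hk]
      exact ⟨isWeightedHomogeneous_zero _ _ _, isWeightedHomogeneous_zero _ _ _⟩
  | single_add a b f haf hb ih =>
    intro k
    have hsplit : (monomial (Finsupp.single a b + f) (1 : ZMod 2)) =
        X a ^ b * monomial f 1 := by
      rw [X_pow_eq_monomial, monomial_mul, mul_one]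
    have hwP : Finsupp.weight (wP (n-1)) (Finsupp.single a b + f) =
        b * wP (n-1) a + Finsupp.weight (wP (n-1)) f := by
      rw [map_add]
      congr 1
      simp [Finsupp.weight_apply, Finsupp.sum_single_index, smul_eq_mul]
    have hwQ : Finsupp.weight (wQ (n-1)) (Finsupp.single a b + f) =
        b * wQ (n-1) a + Finsupp.weight (wQ (n-1)) f := by
      rw [map_add]
      congr 1
      simp [Finsupp.weight_apply, Finsupp.sum_single_index, smul_eq_mul]
    rw [hsplit, hMCartan, hwP, hwQ]
    have hXp := SqM_X_pow_homog hMadd hMzeroth hMCartan hMτ hMuvnP hMuvnQ hMone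
    constructor
    · apply IsWeightedHomogeneous.sum
      intro j hj
      rw [mem_range] at hj
      have h1 := ((tau_pow_homog (n := n)
        (if j % 2 = 1 ∧ (k - j) % 2 = 1 then 1 else 0) (by split_ifs <;> omega)).1.mul
        (hXp b a j).1).mul (ih (k - j)).1
      have he : ∀ A B : ℕ, 0 + (A + j) + (B + (k - j)) = A + B + k := fun A B => by omega
      rwa [he] at h1
    · apply IsWeightedHomogeneous.sum
      intro j hj
      rw [mem_range] at hj
      have h1 := ((tau_pow_homog (n := n)
        (if j % 2 = 1 ∧ (k - j) % 2 = 1 then 1 else 0) (by split_ifs <;> omega)).2.mul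
        (hXp b a j).2).mul (ih (k - j)).2
      have he : ∀ A B : ℕ, (if j % 2 = 1 ∧ (k - j) % 2 = 1 then 1 else 0) + (A + j / 2)
          + (B + (k - j) / 2) = A + B + k / 2 := fun A B => by split_ifs <;> omega
      rwa [he] at h1

omit hMzeroth hMCartan hMτ hMuvnP hMuvnQ hMone in
theorem SqM_sum {ι : Type*} (s : Finset ι)
    (f : ι → MvPolynomial (Option (Fin (n - 1))) (ZMod 2)) (k : ℕ) :
    SqM k (∑ i ∈ s, f i) = ∑ i ∈ s, SqM k (f i) := by
  classical
  induction s using Finset.induction with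
  | empty =>
    simp only [Finset.sum_empty]
    have := hMadd k 0 0
    rw [add_zero] at this
    exact (left_eq_add.mp this)
  | insert _ _ hnot ih =>
    rw [Finset.sum_insert hnot, hMadd, ih, Finset.sum_insert hnot]

theorem SqM_homog {x : MvPolynomial (Option (Fin (n - 1))) (ZMod 2)} {P Q : ℕ}
    (hP : x.IsWeightedHomogeneous (wP (n-1)) P)
    (hQ : x.IsWeightedHomogeneous (wQ (n-1)) Q) (k : ℕ) :
    (SqM k x).IsWeightedHomogeneous (wP (n-1)) (P + k) ∧
    (SqM k x).IsWeightedHomogeneous (wQ (n-1)) (Q + k / 2) := by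
  have hx : x = ∑ e ∈ x.support, monomial e 1 := by
    conv_lhs => rw [x.as_sum]
    exact Finset.sum_congr rfl fun e he =>
      by rw [zmod2_coeff_one (mem_support_iff.mp he)]
  have hm := SqM_monomial_homog hMadd hMzeroth hMCartan hMτ hMuvnP hMuvnQ hMone
  constructor
  · rw [hx, SqM_sum hMadd]
    apply IsWeightedHomogeneous.sum
    intro e he
    have h1 := (hm e k).1
    rwa [hP (mem_support_iff.mp he)] at h1
  · rw [hx, SqM_sum hMadd]
    apply IsWeightedHomogeneous.sum
    intro e he
    have h1 := (hm e k).2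
    rwa [hQ (mem_support_iff.mp he)] at h1
end homog2



-- decomposition of an Option-indexed exponent
theorem option_finsupp_decomp {m : ℕ} (e : Option (Fin m) →₀ ℕ) :
    e = Finsupp.single none (e none) + (e.some).mapDomain Option.some := by
  ext o
  cases o with
  | none =>
    rw [Finsupp.add_apply, Finsupp.single_apply, if_pos rfl,
      Finsupp.mapDomain_notin_range _ _ (by simp), add_zero]
  | some a =>
    rw [Finsupp.add_apply, Finsupp.single_apply, if_neg (by simp),
      Finsupp.mapDomain_apply (Option.some_injective _), Finsupp.some_apply, zero_add]

theorem weight_wP_eq {m : ℕ} (e : Option (Fin m) →₀ ℕ) :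
    Finsupp.weight (wP m) e = pDeg e.some := by
  conv_lhs => rw [option_finsupp_decomp e]
  rw [map_add]
  have h1 : Finsupp.weight (wP m) (Finsupp.single none (e none)) = 0 := by
    simp [Finsupp.weight_apply, Finsupp.sum_single_index, wP]
  have h2 : Finsupp.weight (wP m) ((e.some).mapDomain Option.some) = pDeg e.some := by
    rw [Finsupp.weight_apply, Finsupp.sum_mapDomain_index (by simp) (by intros; rw [add_smul])]
    unfold pDeg
    refine Finsupp.sum_congr fun j _ => ?_
    simp [wP, mul_comm]
  rw [h1, h2, zero_add]

theorem weight_wQ_eq {m : ℕ} (e : Option (Fin m) →₀ ℕ) :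
    Finsupp.weight (wQ m) e = e none + qDeg e.some := by
  conv_lhs => rw [option_finsupp_decomp e]
  rw [map_add]
  have h1 : Finsupp.weight (wQ m) (Finsupp.single none (e none)) = e none := by
    simp [Finsupp.weight_apply, Finsupp.sum_single_index, wQ]
  have h2 : Finsupp.weight (wQ m) ((e.some).mapDomain Option.some) = qDeg e.some := by
    rw [Finsupp.weight_apply, Finsupp.sum_mapDomain_index (by simp) (by intros; rw [add_smul])]
    unfold qDeg
    refine Finsupp.sum_congr fun j _ => ?_
    simp [wQ, mul_comm]
  rw [h1, h2]

theorem tMap_monomial {m : ℕ} (e : Option (Fin m) →₀ ℕ) :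
    tMap (monomial e (1 : ZMod 2)) = monomial e.some 1 := by
  rw [tMap, aeval_monomial, map_one, one_mul]
  conv_lhs => rw [option_finsupp_decomp e]
  rw [Finsupp.prod_add_index (by intros; rw [pow_zero]) (by intros; rw [pow_add])]
  have h1 : (Finsupp.single (none : Option (Fin m)) (e none)).prod
      (fun o k => (Option.elim o 1 X : MvPolynomial (Fin m) (ZMod 2)) ^ k) = 1 := by
    rw [Finsupp.prod_single_index (by rw [pow_zero])]
    exact one_pow _
  have h2 : ((e.some).mapDomain Option.some).prod
      (fun o k => (Option.elim o 1 X : MvPolynomial (Fin m) (ZMod 2)) ^ k) =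
      (e.some).prod fun j k => (X j : MvPolynomial (Fin m) (ZMod 2)) ^ k := by
    rw [Finsupp.prod_mapDomain_index (by intros; rw [pow_zero]) (by intros; rw [pow_add])]
    rfl
  rw [h1, h2, one_mul, monomial_eq, map_one, one_mul]

theorem support_sum_monomials {σ : Type*} (S : Finset (σ →₀ ℕ)) :
    (∑ d ∈ S, monomial d (1 : ZMod 2)).support = S := by
  classical
  ext d'
  rw [mem_support_iff, coeff_sum]
  have : ∀ d ∈ S, coeff d' (monomial d (1 : ZMod 2)) = if d = d' then 1 else 0 :=
    fun d _ => coeff_monomial d' d 1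
  rw [Finset.sum_congr rfl this, Finset.sum_ite_eq' S d' (fun _ => (1 : ZMod 2))]
  split_ifs with h <;> simp [h]

theorem reconstruct {n : ℕ} {x : MvPolynomial (Option (Fin (n-1))) (ZMod 2)} {P Q : ℕ}
    (hP : x.IsWeightedHomogeneous (wP (n-1)) P)
    (hQ : x.IsWeightedHomogeneous (wQ (n-1)) Q)
    (hPQ : Q = P / 2) :
    hMap (tMap x) = x := by
  have hx : x = ∑ e ∈ x.support, monomial e 1 := by
    conv_lhs => rw [x.as_sum]
    exact Finset.sum_congr rfl fun e he =>
      by rw [zmod2_coeff_one (mem_support_iff.mp he)]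
  -- injectivity of e ↦ e.some on the support
  have hinj : ∀ e1 ∈ x.support, ∀ e2 ∈ x.support,
      Finsupp.some e1 = Finsupp.some e2 → e1 = e2 := by
    intro e1 h1 e2 h2 hsome
    have q1 := hQ (mem_support_iff.mp h1)
    have q2 := hQ (mem_support_iff.mp h2)
    rw [weight_wQ_eq] at q1 q2
    have hnone : e1 none = e2 none := by rw [hsome] at q1; omega
    rw [option_finsupp_decomp e1, option_finsupp_decomp e2, hnone, hsome]
  have ht : tMap x = ∑ e ∈ x.support, monomial (Finsupp.some e) 1 := by
    conv_lhs => rw [hx]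
    rw [map_sum]
    exact Finset.sum_congr rfl fun e _ => tMap_monomial e
  have himg : tMap x = ∑ d ∈ x.support.image Finsupp.some, monomial d 1 := by
    rw [ht, Finset.sum_image hinj]
  have hsupp : (tMap x).support = x.support.image Finsupp.some := by
    rw [himg, support_sum_monomials]
  rw [hMap, hsupp, Finset.sum_image hinj]
  conv_rhs => rw [hx]
  refine Finset.sum_congr rfl fun e he => ?_
  have hp := hP (mem_support_iff.mp he)
  have hq := hQ (mem_support_iff.mp he)
  rw [weight_wP_eq] at hp
  rw [weight_wQ_eq] at hq
  have hexp : pDeg (Finsupp.some e) / 2 - qDeg (Finsupp.some e) = e none := by omega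
  rw [hexp, X_pow_eq_monomial, monomial_mul, one_mul, ← option_finsupp_decomp e]

def pjF (j : ℕ) : ℕ := if j = 0 then 2 else 2 ^ j + 1

/-- Lemma 7.11: `t(θ_j) = ρ_j` and `h(ρ_j) = θ_j`, where `θ₀ = u₂`,
`θ_{j+1} = Sq^{2^j} θ_j` for motivic Steenrod operations (motivic Wu and Cartan
formulas, trivial action on `τ`) on `F₂[τ,u₂,…,u_n]` and `ρ₀ = w₂`,
`ρ_{j+1} = Sq^{2^j} ρ_j` for topological Steenrod operations (classical Wu and Cartan
formulas) on `F₂[w₂,…,w_n]`. -/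
theorem t_theta_eq_rho_and_h_rho_eq_theta (n : ℕ)
    (SqM : ℕ → MvPolynomial (Option (Fin (n - 1))) (ZMod 2) →
      MvPolynomial (Option (Fin (n - 1))) (ZMod 2))
    (hMadd : ∀ k x y, SqM k (x + y) = SqM k x + SqM k y)
    (hMzeroth : ∀ x, SqM 0 x = x)
    (hMCartan : ∀ k x y, SqM k (x * y) = ∑ i ∈ range (k + 1),
      (X none : MvPolynomial (Option (Fin (n - 1))) (ZMod 2)) ^
          (if i % 2 = 1 ∧ (k - i) % 2 = 1 then 1 else 0) * SqM i x * SqM (k - i) y)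
    (hMτ : ∀ k, 0 < k → SqM k (X none) = 0)
    (hMWu : ∀ k m, k < m → SqM k (uvn n m) =
      ∑ j ∈ range (k + 1), (Nat.choose (m + j - k - 1) j) • (uvn n (k - j) * uvn n (m + j)))
    (hMdiag : ∀ m, SqM m (uvn n m) = (uvn n m) ^ 2)
    (hMtop : ∀ k m, m < k → SqM k (uvn n m) = 0)
    (SqT : ℕ → MvPolynomial (Fin (n - 1)) (ZMod 2) → MvPolynomial (Fin (n - 1)) (ZMod 2))
    (hTadd : ∀ k x y, SqT k (x + y) = SqT k x + SqT k y)
    (hTzeroth : ∀ x, SqT 0 x = x)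
    (hTCartan : ∀ k x y, SqT k (x * y) = ∑ i ∈ range (k + 1), SqT i x * SqT (k - i) y)
    (hTWu : ∀ k m, k < m → SqT k (wv n m) =
      ∑ j ∈ range (k + 1), (Nat.choose (m + j - k - 1) j) • (wv n (k - j) * wv n (m + j)))
    (hTdiag : ∀ m, SqT m (wv n m) = (wv n m) ^ 2)
    (hTtop : ∀ k m, m < k → SqT k (wv n m) = 0)
    (θ : ℕ → MvPolynomial (Option (Fin (n - 1))) (ZMod 2))
    (hθ0 : θ 0 = uvn n 2) (hθs : ∀ j, θ (j + 1) = SqM (2 ^ j) (θ j))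
    (ρ : ℕ → MvPolynomial (Fin (n - 1)) (ZMod 2))
    (hρ0 : ρ 0 = wv n 2) (hρs : ∀ j, ρ (j + 1) = SqT (2 ^ j) (ρ j)) :
    ∀ j, tMap (θ j) = ρ j ∧ hMap (ρ j) = θ j := by
  have hMone : ∀ k, 0 < k → SqM k 1 = 0 := fun k hk => by
    rw [← uvn_one n]; exact hMtop k 0 hk
  have huvP : ∀ k m, (SqM k (uvn n m)).IsWeightedHomogeneous (wP (n-1)) (m + k) :=
    fun k m => (SqM_uvn_homog n SqM hMWu hMdiag hMtop k m).1
  have huvQ : ∀ k m, (SqM k (uvn n m)).IsWeightedHomogeneous (wQ (n-1)) (m / 2 + k / 2) :=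
    fun k m => (SqM_uvn_homog n SqM hMWu hMdiag hMtop k m).2
  have key : ∀ j, tMap (θ j) = ρ j ∧
      (θ j).IsWeightedHomogeneous (wP (n-1)) (pjF j) ∧
      (θ j).IsWeightedHomogeneous (wQ (n-1)) (pjF j / 2) := by
    intro j
    induction j with
    | zero =>
      rw [hθ0, hρ0]
      refine ⟨tMap_uvn n 2, ?_, ?_⟩
      · have := uvn_homog_P n 2
        simpa [pjF] using this
      · have := uvn_homog_Q n 2
        simpa [pjF] using this
    | succ j ih =>
      obtain ⟨ht, hp, hq⟩ := ih
      have hh := SqM_homog hMadd hMzeroth hMCartan hMτ huvP huvQ hMone hp hq (2 ^ j)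
      have e1 : pjF (j + 1) = pjF j + 2 ^ j := by
        cases j with
        | zero => norm_num [pjF]
        | succ k =>
          simp only [pjF, if_neg (Nat.succ_ne_zero _)]
          rw [pow_succ]
          ring
      have e2 : pjF (j + 1) / 2 = pjF j / 2 + 2 ^ j / 2 := by
        cases j with
        | zero => norm_num [pjF]
        | succ k =>
          simp only [pjF, if_neg (Nat.succ_ne_zero _)]
          have h2 : (2:ℕ) ^ (k + 1) = 2 * 2 ^ k := by rw [pow_succ]; ring
          have h4 : (2:ℕ) ^ (k + 1 + 1) = 4 * 2 ^ k := by rw [pow_succ, pow_succ]; ring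
          rw [h2, h4]
          omega
      refine ⟨?_, ?_, ?_⟩
      · rw [hθs, hρs,
          tMap_SqM n SqM SqT hMadd hMzeroth hMCartan hMτ hMWu hMdiag hMtop hTadd hTzeroth
            hTCartan hTWu hTdiag hTtop (θ j) (2 ^ j), ht]
      · rw [hθs, e1]
        exact hh.1
      · rw [hθs, e2]
        exact hh.2
  intro j
  obtain ⟨ht, hp, hq⟩ := key j
  exact ⟨ht, by rw [← ht]; exact reconstruct hp hq rfl⟩
end
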